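/- arXiv:1906.12073 — 6 statements merged into one kernel-verified Lean document; each statement's English description precedes it below -/
import Mathlib

section
/- Let x ≥ 1 and let P be a collection of 3-element subsets of {0,...,x-1} such that any two triples in P share at most one element and every triple has element-sum at most x-1. Then the number of pairs covered by triples of P is at most x(x-1)/4 - ⌊x/6⌋ (minus an additional 1/2 when x ≡ 2,3 (mod 6), and minus 1 when x ≡ 5 (mod 6)). In particular, |P| ≤ ⌊φ(x)/3⌋ where φ(x) denotes this bound. -/
section AuxStmt2
open Finset

private def mu (x u : ℕ) : ℕ :=
  if 2*x ≤ 3*u+1 then (u-1)/2 else if x ≤ 2*u+1 then u/2 else (u+1)/2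

private lemma L1 (m : ℕ) : (∑ u ∈ range (2*m), (u+1)/2) = m*m ∧
    (∑ u ∈ range (2*m+1), (u+1)/2) = m*m + m := by
  induction m with
  | zero => simp
  | succ m ih =>
    obtain ⟨h1, h2⟩ := ih
    have hA : (∑ u ∈ range (2*(m+1)), (u+1)/2) = (m+1)*(m+1) := by
      rw [show 2*(m+1) = (2*m+1)+1 by ring, Finset.sum_range_succ, h2]
      have : (2*m+1+1)/2 = m+1 := by omega
      rw [this]; try ring
    refine ⟨hA, ?_⟩
    rw [Finset.sum_range_succ, hA]
    have : (2*(m+1)+1)/2 = m+1 := by omega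
    rw [this]; try ring

private lemma L2 (m : ℕ) : (∑ u ∈ range (2*m+1), u/2) = m*m ∧
    (∑ u ∈ range (2*m+2), u/2) = m*m + m := by
  induction m with
  | zero => constructor <;> decide
  | succ m ih =>
    obtain ⟨h1, h2⟩ := ih
    have hA : (∑ u ∈ range (2*(m+1)+1), u/2) = (m+1)*(m+1) := by
      rw [show 2*(m+1)+1 = (2*m+2)+1 by ring, Finset.sum_range_succ, h2]
      have : (2*m+2)/2 = m+1 := by omega
      rw [this]; try ring
    refine ⟨hA, ?_⟩
    rw [show 2*(m+1)+2 = (2*(m+1)+1)+1 by ring, Finset.sum_range_succ, hA]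
    have : (2*(m+1)+1)/2 = m+1 := by omega
    rw [this]; try ring

private lemma L3 (m : ℕ) : (∑ u ∈ range (2*m+2), (u-1)/2) = m*m ∧
    (∑ u ∈ range (2*m+3), (u-1)/2) = m*m + m := by
  induction m with
  | zero => constructor <;> decide
  | succ m ih =>
    obtain ⟨h1, h2⟩ := ih
    have hA : (∑ u ∈ range (2*(m+1)+2), (u-1)/2) = (m+1)*(m+1) := by
      rw [show 2*(m+1)+2 = (2*m+3)+1 by ring, Finset.sum_range_succ, h2]
      have : ((2*m+3)-1)/2 = m+1 := by omega
      rw [this]; try ring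
    refine ⟨hA, ?_⟩
    rw [show 2*(m+1)+3 = (2*(m+1)+2)+1 by ring, Finset.sum_range_succ, hA]
    have : ((2*(m+1)+2)-1)/2 = m+1 := by omega
    rw [this]; try ring

private lemma W1 (m : ℕ) :
    (6*(∑ u ∈ range (2*m), u*((u+1)/2)) + 3*(m*m) = 8*(m*m*m) + m) ∧
    (6*(∑ u ∈ range (2*m+1), u*((u+1)/2)) = 8*(m*m*m) + 9*(m*m) + m) := by
  induction m with
  | zero => simp
  | succ m ih =>
    obtain ⟨h1, h2⟩ := ih
    have hA : 6*(∑ u ∈ range (2*(m+1)), u*((u+1)/2)) + 3*((m+1)*(m+1))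
        = 8*((m+1)*(m+1)*(m+1)) + (m+1) := by
      rw [show 2*(m+1) = (2*m+1)+1 by ring, Finset.sum_range_succ]
      have : ((2*m+1)+1)/2 = m+1 := by omega
      rw [this]
      zify at h2 ⊢
      linear_combination h2
    refine ⟨hA, ?_⟩
    rw [Finset.sum_range_succ]
    have : (2*(m+1)+1)/2 = m+1 := by omega
    rw [this]
    zify at hA ⊢
    linear_combination hA

private lemma W2 (m : ℕ) :
    (6*(∑ u ∈ range (2*m), u*(u/2)) + 9*(m*m) = 8*(m*m*m) + m) ∧
    (6*(∑ u ∈ range (2*m+1), u*(u/2)) = 8*(m*m*m) + 3*(m*m) + m) := by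
  induction m with
  | zero => simp
  | succ m ih =>
    obtain ⟨h1, h2⟩ := ih
    have hA : 6*(∑ u ∈ range (2*(m+1)), u*(u/2)) + 9*((m+1)*(m+1))
        = 8*((m+1)*(m+1)*(m+1)) + (m+1) := by
      rw [show 2*(m+1) = (2*m+1)+1 by ring, Finset.sum_range_succ]
      have : ((2*m+1))/2 = m := by omega
      rw [this]
      zify at h2 ⊢
      linear_combination h2
    refine ⟨hA, ?_⟩
    rw [Finset.sum_range_succ]
    have : (2*(m+1))/2 = m+1 := by omega
    rw [this]
    zify at hA ⊢
    linear_combination hA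

private lemma W3 (m : ℕ) :
    (6*(∑ u ∈ range (2*m), u*((u-1)/2)) + 15*(m*m) = 8*(m*m*m) + 7*m) ∧
    (6*(∑ u ∈ range (2*m+1), u*((u-1)/2)) + 3*(m*m) + 5*m = 8*(m*m*m)) := by
  induction m with
  | zero => simp
  | succ m ih =>
    obtain ⟨h1, h2⟩ := ih
    have hA : 6*(∑ u ∈ range (2*(m+1)), u*((u-1)/2)) + 15*((m+1)*(m+1))
        = 8*((m+1)*(m+1)*(m+1)) + 7*(m+1) := by
      rw [show 2*(m+1) = (2*m+1)+1 by ring, Finset.sum_range_succ]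
      have : ((2*m+1)-1)/2 = m := by omega
      rw [this]
      zify at h2 ⊢
      linear_combination h2
    refine ⟨hA, ?_⟩
    rw [Finset.sum_range_succ]
    have : ((2*(m+1))-1)/2 = m := by omega
    rw [this]
    zify at hA ⊢
    linear_combination hA
open Finset



private lemma sum_split (x : ℕ) (f g1 g2 g3 : ℕ → ℕ)
    (hf1 : ∀ u, ¬ 2*x ≤ 3*u+1 → ¬ x ≤ 2*u+1 → f u = g1 u)
    (hf2 : ∀ u, ¬ 2*x ≤ 3*u+1 → x ≤ 2*u+1 → f u = g2 u)
    (hf3 : ∀ u, 2*x ≤ 3*u+1 → f u = g3 u) :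
    ∑ u ∈ range x, f u + (∑ u ∈ range (x/2), g2 u) + (∑ u ∈ range ((2*x+1)/3), g3 u)
    = (∑ u ∈ range (x/2), g1 u) + (∑ u ∈ range ((2*x+1)/3), g2 u)
      + (∑ u ∈ range x, g3 u) := by
  have h12 : x/2 ≤ (2*x+1)/3 := by omega
  have h2x : (2*x+1)/3 ≤ x := by omega
  have dec : ∀ h : ℕ → ℕ, ∑ u ∈ range x, h u =
      ∑ u ∈ Finset.Ico 0 (x/2), h u + ∑ u ∈ Finset.Ico (x/2) ((2*x+1)/3), h u
        + ∑ u ∈ Finset.Ico ((2*x+1)/3) x, h u := by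
    intro h
    rw [Finset.sum_Ico_consecutive _ (Nat.zero_le _) h12,
      Finset.sum_Ico_consecutive _ (Nat.zero_le _) h2x, Finset.range_eq_Ico]
  have dec2 : ∀ h : ℕ → ℕ, ∑ u ∈ range ((2*x+1)/3), h u =
      ∑ u ∈ Finset.Ico 0 (x/2), h u + ∑ u ∈ Finset.Ico (x/2) ((2*x+1)/3), h u := by
    intro h
    rw [Finset.sum_Ico_consecutive _ (Nat.zero_le _) h12, Finset.range_eq_Ico]
  have m1 : ∑ u ∈ Finset.Ico 0 (x/2), f u = ∑ u ∈ Finset.Ico 0 (x/2), g1 u :=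
    Finset.sum_congr rfl (fun u hu => by
      rw [Finset.mem_Ico] at hu; exact hf1 u (by omega) (by omega))
  have m2 : ∑ u ∈ Finset.Ico (x/2) ((2*x+1)/3), f u
      = ∑ u ∈ Finset.Ico (x/2) ((2*x+1)/3), g2 u :=
    Finset.sum_congr rfl (fun u hu => by
      rw [Finset.mem_Ico] at hu; exact hf2 u (by omega) (by omega))
  have m3 : ∑ u ∈ Finset.Ico ((2*x+1)/3) x, f u = ∑ u ∈ Finset.Ico ((2*x+1)/3) x, g3 u :=
    Finset.sum_congr rfl (fun u hu => by
      rw [Finset.mem_Ico] at hu; exact hf3 u (by omega))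
  rw [dec f, dec g3, dec2 g2, dec2 g3, Finset.range_eq_Ico, m1, m2, m3]
  omega

private lemma sum_mu_split (x : ℕ) :
    ∑ u ∈ range x, mu x u + (∑ u ∈ range (x/2), u/2)
      + (∑ u ∈ range ((2*x+1)/3), (u-1)/2)
    = (∑ u ∈ range (x/2), (u+1)/2) + (∑ u ∈ range ((2*x+1)/3), u/2)
      + (∑ u ∈ range x, (u-1)/2) := by
  apply sum_split x (mu x) _ _ _
  · intro u h1 h2; unfold mu; rw [if_neg h1, if_neg h2]
  · intro u h1 h2; unfold mu; rw [if_neg h1, if_pos h2]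
  · intro u h1; unfold mu; rw [if_pos h1]

private lemma sum_wmu_split (x : ℕ) :
    ∑ u ∈ range x, u * mu x u + (∑ u ∈ range (x/2), u*(u/2))
      + (∑ u ∈ range ((2*x+1)/3), u*((u-1)/2))
    = (∑ u ∈ range (x/2), u*((u+1)/2)) + (∑ u ∈ range ((2*x+1)/3), u*(u/2))
      + (∑ u ∈ range x, u*((u-1)/2)) := by
  apply sum_split x (fun u => u * mu x u) _ _ _
  · intro u h1 h2; unfold mu; rw [if_neg h1, if_neg h2]
  · intro u h1 h2; unfold mu; rw [if_neg h1, if_pos h2]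
  · intro u h1; unfold mu; rw [if_pos h1]
set_option maxHeartbeats 4000000 in
private lemma main_arith (x N K : ℕ) (hx : 1 ≤ x)
    (hN : N ≤ ∑ u ∈ range x, mu x u)
    (hK2 : 2*(x-1)*N ≤ 3*K)
    (hKle : K ≤ ∑ u ∈ range x, u * mu x u) :
    12*N + 3*x + 12*(x/6)
      + (if x % 6 = 2 ∨ x % 6 = 3 then 6 else if x % 6 = 5 then 12 else 0)
      ≤ 3*(x*x) := by
  rcases Nat.lt_or_ge x 12 with hsm | hlg
  · interval_cases x
    · have hS : ∑ u ∈ range 1, mu 1 u = 0 := by decide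
      norm_num
      omega
    · have hS : ∑ u ∈ range 2, mu 2 u = 0 := by decide
      norm_num
      omega
    · have hS : ∑ u ∈ range 3, mu 3 u = 0 := by decide
      norm_num
      omega
    · have hS : ∑ u ∈ range 4, mu 4 u = 3 := by decide
      norm_num
      omega
    · have hS : ∑ u ∈ range 5, mu 5 u = 4 := by decide
      norm_num
      omega
    · have hS : ∑ u ∈ range 6, mu 6 u = 6 := by decide
      norm_num
      omega
    · have hS : ∑ u ∈ range 7, mu 7 u = 9 := by decide
      norm_num
      omega
    · have hS : ∑ u ∈ range 8, mu 8 u = 13 := by decide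
      have hW : ∑ u ∈ range 8, u * mu 8 u = 60 := by decide
      norm_num
      omega
    · have hS : ∑ u ∈ range 9, mu 9 u = 16 := by decide
      norm_num
      omega
    · have hS : ∑ u ∈ range 10, mu 10 u = 21 := by decide
      norm_num
      omega
    · have hS : ∑ u ∈ range 11, mu 11 u = 25 := by decide
      norm_num
      omega
  · obtain ⟨k, hxk⟩ : ∃ k, x = 12*k + (12 + x % 12) := ⟨(x-12)/12, by omega⟩
    have hrlt : x % 12 < 12 := Nat.mod_lt _ (by norm_num)
    interval_cases h : x % 12
    · -- x = 12*k+12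
      have hxx : x = 12*k+12 := by omega
      subst hxx
      have A1 : ∑ u ∈ range ((12*k+12)/2), (u+1)/2 = (3*k+3)*(3*k+3) := by
        rw [show (12*k+12)/2 = 2*(3*k+3) from by omega]; exact (L1 (3*k+3)).1
      have A2 : ∑ u ∈ range ((12*k+12)/2), u/2 = (3*k+2)*(3*k+2) + (3*k+2) := by
        rw [show (12*k+12)/2 = 2*(3*k+2)+2 from by omega]; exact (L2 (3*k+2)).2
      have A3 : ∑ u ∈ range ((2*(12*k+12)+1)/3), u/2 = (4*k+3)*(4*k+3) + (4*k+3) := by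
        rw [show (2*(12*k+12)+1)/3 = 2*(4*k+3)+2 from by omega]; exact (L2 (4*k+3)).2
      have A4 : ∑ u ∈ range ((2*(12*k+12)+1)/3), (u-1)/2 = (4*k+3)*(4*k+3) := by
        rw [show (2*(12*k+12)+1)/3 = 2*(4*k+3)+2 from by omega]; exact (L3 (4*k+3)).1
      have A5 : ∑ u ∈ range (12*k+12), (u-1)/2 = (6*k+5)*(6*k+5) := by
        rw [show (12*k+12) = 2*(6*k+5)+2 from by omega]; exact (L3 (6*k+5)).1
      have hsum := sum_mu_split (12*k+12)
      rw [A1, A2, A3, A4, A5] at hsum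
      have h6 : (12*k+12)/6 = 2*k+2 := by omega
      have hm6 : (12*k+12)%6 = 0 := by omega
      rw [h6, hm6]
      norm_num
      linarith [hN, hsum]
    · -- x = 12*k+13
      have hxx : x = 12*k+13 := by omega
      subst hxx
      have A1 : ∑ u ∈ range ((12*k+13)/2), (u+1)/2 = (3*k+3)*(3*k+3) := by
        rw [show (12*k+13)/2 = 2*(3*k+3) from by omega]; exact (L1 (3*k+3)).1
      have A2 : ∑ u ∈ range ((12*k+13)/2), u/2 = (3*k+2)*(3*k+2) + (3*k+2) := by
        rw [show (12*k+13)/2 = 2*(3*k+2)+2 from by omega]; exact (L2 (3*k+2)).2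
      have A3 : ∑ u ∈ range ((2*(12*k+13)+1)/3), u/2 = (4*k+4)*(4*k+4) := by
        rw [show (2*(12*k+13)+1)/3 = 2*(4*k+4)+1 from by omega]; exact (L2 (4*k+4)).1
      have A4 : ∑ u ∈ range ((2*(12*k+13)+1)/3), (u-1)/2 = (4*k+3)*(4*k+3) + (4*k+3) := by
        rw [show (2*(12*k+13)+1)/3 = 2*(4*k+3)+3 from by omega]; exact (L3 (4*k+3)).2
      have A5 : ∑ u ∈ range (12*k+13), (u-1)/2 = (6*k+5)*(6*k+5) + (6*k+5) := by
        rw [show (12*k+13) = 2*(6*k+5)+3 from by omega]; exact (L3 (6*k+5)).2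
      have hsum := sum_mu_split (12*k+13)
      rw [A1, A2, A3, A4, A5] at hsum
      have h6 : (12*k+13)/6 = 2*k+2 := by omega
      have hm6 : (12*k+13)%6 = 1 := by omega
      rw [h6, hm6]
      norm_num
      linarith [hN, hsum]
    · -- x = 12*k+14
      have hxx : x = 12*k+14 := by omega
      subst hxx
      have A1 : ∑ u ∈ range ((12*k+14)/2), (u+1)/2 = (3*k+3)*(3*k+3) + (3*k+3) := by
        rw [show (12*k+14)/2 = 2*(3*k+3)+1 from by omega]; exact (L1 (3*k+3)).2
      have A2 : ∑ u ∈ range ((12*k+14)/2), u/2 = (3*k+3)*(3*k+3) := by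
        rw [show (12*k+14)/2 = 2*(3*k+3)+1 from by omega]; exact (L2 (3*k+3)).1
      have A3 : ∑ u ∈ range ((2*(12*k+14)+1)/3), u/2 = (4*k+4)*(4*k+4) := by
        rw [show (2*(12*k+14)+1)/3 = 2*(4*k+4)+1 from by omega]; exact (L2 (4*k+4)).1
      have A4 : ∑ u ∈ range ((2*(12*k+14)+1)/3), (u-1)/2 = (4*k+3)*(4*k+3) + (4*k+3) := by
        rw [show (2*(12*k+14)+1)/3 = 2*(4*k+3)+3 from by omega]; exact (L3 (4*k+3)).2
      have A5 : ∑ u ∈ range (12*k+14), (u-1)/2 = (6*k+6)*(6*k+6) := by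
        rw [show (12*k+14) = 2*(6*k+6)+2 from by omega]; exact (L3 (6*k+6)).1
      have hsum := sum_mu_split (12*k+14)
      rw [A1, A2, A3, A4, A5] at hsum
      have h6 : (12*k+14)/6 = 2*k+2 := by omega
      have hm6 : (12*k+14)%6 = 2 := by omega
      rw [h6, hm6]
      norm_num
      linarith [hN, hsum]
    · -- x = 12*k+15
      have hxx : x = 12*k+15 := by omega
      subst hxx
      have A1 : ∑ u ∈ range ((12*k+15)/2), (u+1)/2 = (3*k+3)*(3*k+3) + (3*k+3) := by
        rw [show (12*k+15)/2 = 2*(3*k+3)+1 from by omega]; exact (L1 (3*k+3)).2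
      have A2 : ∑ u ∈ range ((12*k+15)/2), u/2 = (3*k+3)*(3*k+3) := by
        rw [show (12*k+15)/2 = 2*(3*k+3)+1 from by omega]; exact (L2 (3*k+3)).1
      have A3 : ∑ u ∈ range ((2*(12*k+15)+1)/3), u/2 = (4*k+4)*(4*k+4) + (4*k+4) := by
        rw [show (2*(12*k+15)+1)/3 = 2*(4*k+4)+2 from by omega]; exact (L2 (4*k+4)).2
      have A4 : ∑ u ∈ range ((2*(12*k+15)+1)/3), (u-1)/2 = (4*k+4)*(4*k+4) := by
        rw [show (2*(12*k+15)+1)/3 = 2*(4*k+4)+2 from by omega]; exact (L3 (4*k+4)).1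
      have A5 : ∑ u ∈ range (12*k+15), (u-1)/2 = (6*k+6)*(6*k+6) + (6*k+6) := by
        rw [show (12*k+15) = 2*(6*k+6)+3 from by omega]; exact (L3 (6*k+6)).2
      have hsum := sum_mu_split (12*k+15)
      rw [A1, A2, A3, A4, A5] at hsum
      have h6 : (12*k+15)/6 = 2*k+2 := by omega
      have hm6 : (12*k+15)%6 = 3 := by omega
      rw [h6, hm6]
      norm_num
      linarith [hN, hsum]
    · -- x = 12*k+16
      have hxx : x = 12*k+16 := by omega
      subst hxx
      have A1 : ∑ u ∈ range ((12*k+16)/2), (u+1)/2 = (3*k+4)*(3*k+4) := by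
        rw [show (12*k+16)/2 = 2*(3*k+4) from by omega]; exact (L1 (3*k+4)).1
      have A2 : ∑ u ∈ range ((12*k+16)/2), u/2 = (3*k+3)*(3*k+3) + (3*k+3) := by
        rw [show (12*k+16)/2 = 2*(3*k+3)+2 from by omega]; exact (L2 (3*k+3)).2
      have A3 : ∑ u ∈ range ((2*(12*k+16)+1)/3), u/2 = (4*k+5)*(4*k+5) := by
        rw [show (2*(12*k+16)+1)/3 = 2*(4*k+5)+1 from by omega]; exact (L2 (4*k+5)).1
      have A4 : ∑ u ∈ range ((2*(12*k+16)+1)/3), (u-1)/2 = (4*k+4)*(4*k+4) + (4*k+4) := by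
        rw [show (2*(12*k+16)+1)/3 = 2*(4*k+4)+3 from by omega]; exact (L3 (4*k+4)).2
      have A5 : ∑ u ∈ range (12*k+16), (u-1)/2 = (6*k+7)*(6*k+7) := by
        rw [show (12*k+16) = 2*(6*k+7)+2 from by omega]; exact (L3 (6*k+7)).1
      have hsum := sum_mu_split (12*k+16)
      rw [A1, A2, A3, A4, A5] at hsum
      have h6 : (12*k+16)/6 = 2*k+2 := by omega
      have hm6 : (12*k+16)%6 = 4 := by omega
      rw [h6, hm6]
      norm_num
      linarith [hN, hsum]
    · -- x = 12*k+17
      have hxx : x = 12*k+17 := by omega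
      subst hxx
      have A1 : ∑ u ∈ range ((12*k+17)/2), (u+1)/2 = (3*k+4)*(3*k+4) := by
        rw [show (12*k+17)/2 = 2*(3*k+4) from by omega]; exact (L1 (3*k+4)).1
      have A2 : ∑ u ∈ range ((12*k+17)/2), u/2 = (3*k+3)*(3*k+3) + (3*k+3) := by
        rw [show (12*k+17)/2 = 2*(3*k+3)+2 from by omega]; exact (L2 (3*k+3)).2
      have A3 : ∑ u ∈ range ((2*(12*k+17)+1)/3), u/2 = (4*k+5)*(4*k+5) := by
        rw [show (2*(12*k+17)+1)/3 = 2*(4*k+5)+1 from by omega]; exact (L2 (4*k+5)).1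
      have A4 : ∑ u ∈ range ((2*(12*k+17)+1)/3), (u-1)/2 = (4*k+4)*(4*k+4) + (4*k+4) := by
        rw [show (2*(12*k+17)+1)/3 = 2*(4*k+4)+3 from by omega]; exact (L3 (4*k+4)).2
      have A5 : ∑ u ∈ range (12*k+17), (u-1)/2 = (6*k+7)*(6*k+7) + (6*k+7) := by
        rw [show (12*k+17) = 2*(6*k+7)+3 from by omega]; exact (L3 (6*k+7)).2
      have hsum := sum_mu_split (12*k+17)
      rw [A1, A2, A3, A4, A5] at hsum
      have h6 : (12*k+17)/6 = 2*k+2 := by omega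
      have hm6 : (12*k+17)%6 = 5 := by omega
      rw [h6, hm6]
      norm_num
      linarith [hN, hsum]
    · -- x = 12*k+18
      have hxx : x = 12*k+18 := by omega
      subst hxx
      have A1 : ∑ u ∈ range ((12*k+18)/2), (u+1)/2 = (3*k+4)*(3*k+4) + (3*k+4) := by
        rw [show (12*k+18)/2 = 2*(3*k+4)+1 from by omega]; exact (L1 (3*k+4)).2
      have A2 : ∑ u ∈ range ((12*k+18)/2), u/2 = (3*k+4)*(3*k+4) := by
        rw [show (12*k+18)/2 = 2*(3*k+4)+1 from by omega]; exact (L2 (3*k+4)).1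
      have A3 : ∑ u ∈ range ((2*(12*k+18)+1)/3), u/2 = (4*k+5)*(4*k+5) + (4*k+5) := by
        rw [show (2*(12*k+18)+1)/3 = 2*(4*k+5)+2 from by omega]; exact (L2 (4*k+5)).2
      have A4 : ∑ u ∈ range ((2*(12*k+18)+1)/3), (u-1)/2 = (4*k+5)*(4*k+5) := by
        rw [show (2*(12*k+18)+1)/3 = 2*(4*k+5)+2 from by omega]; exact (L3 (4*k+5)).1
      have A5 : ∑ u ∈ range (12*k+18), (u-1)/2 = (6*k+8)*(6*k+8) := by
        rw [show (12*k+18) = 2*(6*k+8)+2 from by omega]; exact (L3 (6*k+8)).1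
      have hsum := sum_mu_split (12*k+18)
      rw [A1, A2, A3, A4, A5] at hsum
      have h6 : (12*k+18)/6 = 2*k+3 := by omega
      have hm6 : (12*k+18)%6 = 0 := by omega
      rw [h6, hm6]
      norm_num
      linarith [hN, hsum]
    · -- x = 12*k+19
      have hxx : x = 12*k+19 := by omega
      subst hxx
      have A1 : ∑ u ∈ range ((12*k+19)/2), (u+1)/2 = (3*k+4)*(3*k+4) + (3*k+4) := by
        rw [show (12*k+19)/2 = 2*(3*k+4)+1 from by omega]; exact (L1 (3*k+4)).2
      have A2 : ∑ u ∈ range ((12*k+19)/2), u/2 = (3*k+4)*(3*k+4) := by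
        rw [show (12*k+19)/2 = 2*(3*k+4)+1 from by omega]; exact (L2 (3*k+4)).1
      have A3 : ∑ u ∈ range ((2*(12*k+19)+1)/3), u/2 = (4*k+6)*(4*k+6) := by
        rw [show (2*(12*k+19)+1)/3 = 2*(4*k+6)+1 from by omega]; exact (L2 (4*k+6)).1
      have A4 : ∑ u ∈ range ((2*(12*k+19)+1)/3), (u-1)/2 = (4*k+5)*(4*k+5) + (4*k+5) := by
        rw [show (2*(12*k+19)+1)/3 = 2*(4*k+5)+3 from by omega]; exact (L3 (4*k+5)).2
      have A5 : ∑ u ∈ range (12*k+19), (u-1)/2 = (6*k+8)*(6*k+8) + (6*k+8) := by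
        rw [show (12*k+19) = 2*(6*k+8)+3 from by omega]; exact (L3 (6*k+8)).2
      have hsum := sum_mu_split (12*k+19)
      rw [A1, A2, A3, A4, A5] at hsum
      have h6 : (12*k+19)/6 = 2*k+3 := by omega
      have hm6 : (12*k+19)%6 = 1 := by omega
      rw [h6, hm6]
      norm_num
      linarith [hN, hsum]
    · -- x = 12*k+20
      have hxx : x = 12*k+20 := by omega
      subst hxx
      have A1 : ∑ u ∈ range ((12*k+20)/2), (u+1)/2 = (3*k+5)*(3*k+5) := by
        rw [show (12*k+20)/2 = 2*(3*k+5) from by omega]; exact (L1 (3*k+5)).1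
      have A2 : ∑ u ∈ range ((12*k+20)/2), u/2 = (3*k+4)*(3*k+4) + (3*k+4) := by
        rw [show (12*k+20)/2 = 2*(3*k+4)+2 from by omega]; exact (L2 (3*k+4)).2
      have A3 : ∑ u ∈ range ((2*(12*k+20)+1)/3), u/2 = (4*k+6)*(4*k+6) := by
        rw [show (2*(12*k+20)+1)/3 = 2*(4*k+6)+1 from by omega]; exact (L2 (4*k+6)).1
      have A4 : ∑ u ∈ range ((2*(12*k+20)+1)/3), (u-1)/2 = (4*k+5)*(4*k+5) + (4*k+5) := by
        rw [show (2*(12*k+20)+1)/3 = 2*(4*k+5)+3 from by omega]; exact (L3 (4*k+5)).2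
      have A5 : ∑ u ∈ range (12*k+20), (u-1)/2 = (6*k+9)*(6*k+9) := by
        rw [show (12*k+20) = 2*(6*k+9)+2 from by omega]; exact (L3 (6*k+9)).1
      have hsum := sum_mu_split (12*k+20)
      rw [A1, A2, A3, A4, A5] at hsum
      -- strict improvement for x ≡ 8 (mod 12)
      have B1 : 6*(∑ u ∈ range ((12*k+20)/2), u*((u+1)/2)) + 3*((3*k+5)*(3*k+5)) = 8*((3*k+5)*(3*k+5)*(3*k+5)) + (3*k+5) := by
        rw [show (12*k+20)/2 = 2*(3*k+5) from by omega]; exact (W1 (3*k+5)).1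
      have B2 : 6*(∑ u ∈ range ((12*k+20)/2), u*(u/2)) + 9*((3*k+5)*(3*k+5)) = 8*((3*k+5)*(3*k+5)*(3*k+5)) + (3*k+5) := by
        rw [show (12*k+20)/2 = 2*(3*k+5) from by omega]; exact (W2 (3*k+5)).1
      have B3 : 6*(∑ u ∈ range ((2*(12*k+20)+1)/3), u*(u/2)) = 8*((4*k+6)*(4*k+6)*(4*k+6)) + 3*((4*k+6)*(4*k+6)) + (4*k+6) := by
        rw [show (2*(12*k+20)+1)/3 = 2*(4*k+6)+1 from by omega]; exact (W2 (4*k+6)).2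
      have B4 : 6*(∑ u ∈ range ((2*(12*k+20)+1)/3), u*((u-1)/2)) + 3*((4*k+6)*(4*k+6)) + 5*(4*k+6) = 8*((4*k+6)*(4*k+6)*(4*k+6)) := by
        rw [show (2*(12*k+20)+1)/3 = 2*(4*k+6)+1 from by omega]; exact (W3 (4*k+6)).2
      have B5 : 6*(∑ u ∈ range (12*k+20), u*((u-1)/2)) + 15*((6*k+10)*(6*k+10)) = 8*((6*k+10)*(6*k+10)*(6*k+10)) + 7*(6*k+10) := by
        rw [show (12*k+20) = 2*(6*k+10) from by omega]; exact (W3 (6*k+10)).1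
      have hsumW := sum_wmu_split (12*k+20)
      have hW6 : 6*(∑ u ∈ range (12*k+20), u * mu (12*k+20) u)
          ≤ 1728*(k*k*k) + 8250*(k*k) + 13134*k + 6972 := by linarith [hsumW, B1, B2, B3, B4, B5]
      have hx1 : 12*k+20-1 = 12*k+19 := by omega
      rw [hx1] at hK2
      have hNK : 12*((12*k+19)*N) ≤ 5184*(k*k*k) + 24750*(k*k) + 39402*k + 20916 := by
        linarith [hK2, hKle, hW6]
      have hNle : N ≤ 36*(k*k) + 115*k + 91 := by
        by_contra hcon
        push_neg at hcon
        have h92 : 36*(k*k) + 115*k + 92 ≤ N := hcon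
        have hmul := Nat.mul_le_mul_left (144*k+228) h92
        have hexp : (144*k+228)*(36*(k*k) + 115*k + 92)
            = 5184*(k*k*k) + 24768*(k*k) + 39468*k + 20976 := by ring
        have hexp2 : (144*k+228)*N = 12*((12*k+19)*N) := by ring
        linarith [hmul, hNK, hexp, hexp2, Nat.zero_le (k*k), Nat.zero_le k]
      have h6 : (12*k+20)/6 = 2*k+3 := by omega
      have hm6 : (12*k+20)%6 = 2 := by omega
      rw [h6, hm6]
      norm_num
      linarith [hNle]
    · -- x = 12*k+21
      have hxx : x = 12*k+21 := by omega
      subst hxx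
      have A1 : ∑ u ∈ range ((12*k+21)/2), (u+1)/2 = (3*k+5)*(3*k+5) := by
        rw [show (12*k+21)/2 = 2*(3*k+5) from by omega]; exact (L1 (3*k+5)).1
      have A2 : ∑ u ∈ range ((12*k+21)/2), u/2 = (3*k+4)*(3*k+4) + (3*k+4) := by
        rw [show (12*k+21)/2 = 2*(3*k+4)+2 from by omega]; exact (L2 (3*k+4)).2
      have A3 : ∑ u ∈ range ((2*(12*k+21)+1)/3), u/2 = (4*k+6)*(4*k+6) + (4*k+6) := by
        rw [show (2*(12*k+21)+1)/3 = 2*(4*k+6)+2 from by omega]; exact (L2 (4*k+6)).2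
      have A4 : ∑ u ∈ range ((2*(12*k+21)+1)/3), (u-1)/2 = (4*k+6)*(4*k+6) := by
        rw [show (2*(12*k+21)+1)/3 = 2*(4*k+6)+2 from by omega]; exact (L3 (4*k+6)).1
      have A5 : ∑ u ∈ range (12*k+21), (u-1)/2 = (6*k+9)*(6*k+9) + (6*k+9) := by
        rw [show (12*k+21) = 2*(6*k+9)+3 from by omega]; exact (L3 (6*k+9)).2
      have hsum := sum_mu_split (12*k+21)
      rw [A1, A2, A3, A4, A5] at hsum
      have h6 : (12*k+21)/6 = 2*k+3 := by omega
      have hm6 : (12*k+21)%6 = 3 := by omega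
      rw [h6, hm6]
      norm_num
      linarith [hN, hsum]
    · -- x = 12*k+22
      have hxx : x = 12*k+22 := by omega
      subst hxx
      have A1 : ∑ u ∈ range ((12*k+22)/2), (u+1)/2 = (3*k+5)*(3*k+5) + (3*k+5) := by
        rw [show (12*k+22)/2 = 2*(3*k+5)+1 from by omega]; exact (L1 (3*k+5)).2
      have A2 : ∑ u ∈ range ((12*k+22)/2), u/2 = (3*k+5)*(3*k+5) := by
        rw [show (12*k+22)/2 = 2*(3*k+5)+1 from by omega]; exact (L2 (3*k+5)).1
      have A3 : ∑ u ∈ range ((2*(12*k+22)+1)/3), u/2 = (4*k+7)*(4*k+7) := by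
        rw [show (2*(12*k+22)+1)/3 = 2*(4*k+7)+1 from by omega]; exact (L2 (4*k+7)).1
      have A4 : ∑ u ∈ range ((2*(12*k+22)+1)/3), (u-1)/2 = (4*k+6)*(4*k+6) + (4*k+6) := by
        rw [show (2*(12*k+22)+1)/3 = 2*(4*k+6)+3 from by omega]; exact (L3 (4*k+6)).2
      have A5 : ∑ u ∈ range (12*k+22), (u-1)/2 = (6*k+10)*(6*k+10) := by
        rw [show (12*k+22) = 2*(6*k+10)+2 from by omega]; exact (L3 (6*k+10)).1
      have hsum := sum_mu_split (12*k+22)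
      rw [A1, A2, A3, A4, A5] at hsum
      have h6 : (12*k+22)/6 = 2*k+3 := by omega
      have hm6 : (12*k+22)%6 = 4 := by omega
      rw [h6, hm6]
      norm_num
      linarith [hN, hsum]
    · -- x = 12*k+23
      have hxx : x = 12*k+23 := by omega
      subst hxx
      have A1 : ∑ u ∈ range ((12*k+23)/2), (u+1)/2 = (3*k+5)*(3*k+5) + (3*k+5) := by
        rw [show (12*k+23)/2 = 2*(3*k+5)+1 from by omega]; exact (L1 (3*k+5)).2
      have A2 : ∑ u ∈ range ((12*k+23)/2), u/2 = (3*k+5)*(3*k+5) := by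
        rw [show (12*k+23)/2 = 2*(3*k+5)+1 from by omega]; exact (L2 (3*k+5)).1
      have A3 : ∑ u ∈ range ((2*(12*k+23)+1)/3), u/2 = (4*k+7)*(4*k+7) := by
        rw [show (2*(12*k+23)+1)/3 = 2*(4*k+7)+1 from by omega]; exact (L2 (4*k+7)).1
      have A4 : ∑ u ∈ range ((2*(12*k+23)+1)/3), (u-1)/2 = (4*k+6)*(4*k+6) + (4*k+6) := by
        rw [show (2*(12*k+23)+1)/3 = 2*(4*k+6)+3 from by omega]; exact (L3 (4*k+6)).2
      have A5 : ∑ u ∈ range (12*k+23), (u-1)/2 = (6*k+10)*(6*k+10) + (6*k+10) := by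
        rw [show (12*k+23) = 2*(6*k+10)+3 from by omega]; exact (L3 (6*k+10)).2
      have hsum := sum_mu_split (12*k+23)
      rw [A1, A2, A3, A4, A5] at hsum
      have h6 : (12*k+23)/6 = 2*k+3 := by omega
      have hm6 : (12*k+23)%6 = 5 := by omega
      rw [h6, hm6]
      norm_num
      linarith [hN, hsum]
end AuxStmt2

/-- The bound `φ(x) = x(x-1)/4 - ⌊x/6⌋ - c`, where `c = 1/2` when `x ≡ 2,3 (mod 6)`,
`c = 1` when `x ≡ 5 (mod 6)`, and `c = 0` otherwise. -/
def phi (x : ℕ) : ℚ :=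
  (x * (x - 1) : ℚ) / 4 - ((x / 6 : ℕ) : ℚ) -
    (if x % 6 = 2 ∨ x % 6 = 3 then 1 / 2 else if x % 6 = 5 then 1 else 0)

/-- If `P` is a `2-(x,3,1)` packing on `{0,…,x-1}` all of whose triples have sum at most
`x-1`, then the number of pairs covered by triples of `P` is at most `φ(x)`, and
`|P| ≤ ⌊φ(x)/3⌋`. -/
theorem stmt_2 (x : ℕ) (hx : 1 ≤ x) (P : Finset (Finset ℕ))
    (hP : ∀ T ∈ P, T ⊆ Finset.range x ∧ T.card = 3 ∧ T.sum id ≤ x - 1)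
    (hpack : ∀ T ∈ P, ∀ T' ∈ P, T ≠ T' → (T ∩ T').card ≤ 1) :
    (((((Finset.range x).powersetCard 2).filter
        (fun p => ∃ T ∈ P, p ⊆ T)).card : ℚ) ≤ phi x) ∧
    ((P.card : ℤ) ≤ ⌊phi x / 3⌋) := by
  classical
  set p := P.card with hp
  set d : ℕ → ℕ := fun v => (P.filter (fun T => v ∈ T)).card with hd
  have hcovset : (((Finset.range x).powersetCard 2).filter (fun q => ∃ T ∈ P, q ⊆ T))
      = P.biUnion (fun T => T.powersetCard 2) := by
    ext a
    simp only [Finset.mem_filter, Finset.mem_powersetCard, Finset.mem_biUnion]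
    constructor
    · rintro ⟨⟨hsub, hcard⟩, T, hT, haT⟩
      exact ⟨T, hT, haT, hcard⟩
    · rintro ⟨T, hT, haT, hcard⟩
      exact ⟨⟨haT.trans (hP T hT).1, hcard⟩, T, hT, haT⟩
  have hdisjpow : ∀ T ∈ P, ∀ T' ∈ P, T ≠ T' →
      Disjoint (T.powersetCard 2) (T'.powersetCard 2) := by
    intro T hT T' hT' hne
    rw [Finset.disjoint_left]
    intro a ha ha'
    rw [Finset.mem_powersetCard] at ha ha'
    have hsub : a ⊆ T ∩ T' := Finset.subset_inter ha.1 ha'.1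
    have h1 := Finset.card_le_card hsub
    have h2 := hpack T hT T' hT' hne
    have h3 := ha.2
    omega
  have hcov : (((Finset.range x).powersetCard 2).filter (fun q => ∃ T ∈ P, q ⊆ T)).card
      = 3 * p := by
    rw [hcovset, Finset.card_biUnion hdisjpow]
    have h3 : ∀ T ∈ P, (T.powersetCard 2).card = 3 := by
      intro T hT
      rw [Finset.card_powersetCard, (hP T hT).2.1]
      decide
    rw [Finset.sum_congr rfl h3, Finset.sum_const, smul_eq_mul, mul_comm]
  have hfilter_range : ∀ T ∈ P, (Finset.range x).filter (fun v => v ∈ T) = T := by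
    intro T hT; ext v
    simp only [Finset.mem_filter, Finset.mem_range]
    exact ⟨fun h => h.2, fun h => ⟨Finset.mem_range.mp ((hP T hT).1 h), h⟩⟩
  have hdeg : ∑ v ∈ Finset.range x, d v = 3 * p := by
    calc ∑ v ∈ Finset.range x, d v
        = ∑ v ∈ Finset.range x, ∑ T ∈ P, (if v ∈ T then 1 else 0) := by
          refine Finset.sum_congr rfl (fun v _ => ?_)
          simp only [hd, Finset.card_filter]
      _ = ∑ T ∈ P, ∑ v ∈ Finset.range x, (if v ∈ T then 1 else 0) := Finset.sum_comm
      _ = ∑ T ∈ P, 3 := by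
          refine Finset.sum_congr rfl (fun T hT => ?_)
          rw [← Finset.card_filter, hfilter_range T hT, (hP T hT).2.1]
      _ = 3 * p := by rw [Finset.sum_const, smul_eq_mul, mul_comm]
  have hwsum : ∑ v ∈ Finset.range x, v * d v ≤ (x-1) * p := by
    calc ∑ v ∈ Finset.range x, v * d v
        = ∑ v ∈ Finset.range x, ∑ T ∈ P, (if v ∈ T then v else 0) := by
          refine Finset.sum_congr rfl (fun v _ => ?_)
          simp only [hd, Finset.card_filter, Finset.mul_sum, mul_ite, mul_one, mul_zero]
      _ = ∑ T ∈ P, ∑ v ∈ Finset.range x, (if v ∈ T then v else 0) := Finset.sum_comm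
      _ = ∑ T ∈ P, T.sum id := by
          refine Finset.sum_congr rfl (fun T hT => ?_)
          rw [← Finset.sum_filter, hfilter_range T hT]
          rfl
      _ ≤ ∑ T ∈ P, (x-1) := Finset.sum_le_sum (fun T hT => (hP T hT).2.2)
      _ = (x-1) * p := by rw [Finset.sum_const, smul_eq_mul, mul_comm]
  have hdisjE : ∀ v, ∀ T ∈ P.filter (fun T => v ∈ T), ∀ T' ∈ P.filter (fun T => v ∈ T),
      T ≠ T' → Disjoint (T.erase v) (T'.erase v) := by
    intro v T hT T' hT' hne
    rw [Finset.mem_filter] at hT hT'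
    rw [Finset.disjoint_left]
    intro w hw hw'
    rw [Finset.mem_erase] at hw hw'
    have hsub : ({w, v} : Finset ℕ) ⊆ T ∩ T' := by
      intro z hz
      rw [Finset.mem_insert, Finset.mem_singleton] at hz
      rcases hz with rfl | rfl
      · exact Finset.mem_inter.mpr ⟨hw.2, hw'.2⟩
      · exact Finset.mem_inter.mpr ⟨hT.2, hT'.2⟩
    have hc : ({w, v} : Finset ℕ).card = 2 := Finset.card_pair hw.1
    have h1 := Finset.card_le_card hsub
    have h2 := hpack T hT.1 T' hT'.1 hne
    omega
  have hbB : ∀ v, v < x → 2 * d v + (if 2*v+1 ≤ x then 1 else 0) + v ≤ x := by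
    intro v hv
    have hcardU : ((P.filter (fun T => v ∈ T)).biUnion (fun T => T.erase v)).card
        = 2 * d v := by
      rw [Finset.card_biUnion (hdisjE v)]
      have h2 : ∀ T ∈ P.filter (fun T => v ∈ T), (T.erase v).card = 2 := by
        intro T hT
        rw [Finset.mem_filter] at hT
        rw [Finset.card_erase_of_mem hT.2, (hP T hT.1).2.1]
      rw [Finset.sum_congr rfl h2, Finset.sum_const, smul_eq_mul, mul_comm]
    have hsubU : ((P.filter (fun T => v ∈ T)).biUnion (fun T => T.erase v))
        ⊆ (Finset.range (x-v)).erase v := by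
      intro w hw
      rw [Finset.mem_biUnion] at hw
      obtain ⟨T, hTQ, hwT⟩ := hw
      rw [Finset.mem_filter] at hTQ
      have h2 : w ≤ (T.erase v).sum id := by
        have := Finset.single_le_sum (f := id) (fun i _ => Nat.zero_le (id i)) hwT
        simpa using this
      have h3 : (T.erase v).sum id + v = T.sum id := by
        have := Finset.sum_erase_add T id hTQ.2
        simpa using this
      have hle := (hP T hTQ.1).2.2
      rw [Finset.mem_erase] at hwT
      rw [Finset.mem_erase, Finset.mem_range]
      exact ⟨hwT.1, by omega⟩
    have hcard2 := Finset.card_le_card hsubU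
    rw [hcardU] at hcard2
    by_cases h2v : 2*v+1 ≤ x
    · have hvmem : v ∈ Finset.range (x-v) := Finset.mem_range.mpr (by omega)
      rw [Finset.card_erase_of_mem hvmem, Finset.card_range] at hcard2
      rw [if_pos h2v]
      omega
    · have hce : ((Finset.range (x-v)).erase v).card ≤ x - v := by
        calc ((Finset.range (x-v)).erase v).card ≤ (Finset.range (x-v)).card :=
              Finset.card_le_card (Finset.erase_subset _ _)
          _ = x - v := Finset.card_range _
      rw [if_neg h2v]
      omega
  have hbA : ∀ v, v < x → d v + (if 3*v+2 ≤ x then 1 else 0) ≤ (x-v)/2 := by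
    intro v hv
    set R := (P.filter (fun T => v ∈ T)).biUnion
      (fun T => (T.erase v).filter (fun a => 2*a+2+v ≤ x)) with hR
    have hne : ∀ T ∈ P.filter (fun T => v ∈ T),
        1 ≤ ((T.erase v).filter (fun a => 2*a+2+v ≤ x)).card := by
      intro T hTQ
      rw [Finset.mem_filter] at hTQ
      have hc2 : (T.erase v).card = 2 := by
        rw [Finset.card_erase_of_mem hTQ.2, (hP T hTQ.1).2.1]
      obtain ⟨a, b, hab, hE⟩ := Finset.card_eq_two.mp hc2
      have hsumE : (T.erase v).sum id = a + b := by
        rw [hE]; exact Finset.sum_pair hab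
      have h3 : (T.erase v).sum id + v = T.sum id := by
        have := Finset.sum_erase_add T id hTQ.2
        simpa using this
      have hle := (hP T hTQ.1).2.2
      rcases le_total a b with h | h
      · exact Finset.Nonempty.card_pos ⟨a, Finset.mem_filter.mpr
          ⟨by rw [hE]; exact Finset.mem_insert_self a {b}, by omega⟩⟩
      · exact Finset.Nonempty.card_pos ⟨b, Finset.mem_filter.mpr
          ⟨by rw [hE]; exact Finset.mem_insert_of_mem (Finset.mem_singleton_self b),
            by omega⟩⟩
    have hdisjF : ∀ T ∈ P.filter (fun T => v ∈ T), ∀ T' ∈ P.filter (fun T => v ∈ T),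
        T ≠ T' → Disjoint ((T.erase v).filter (fun a => 2*a+2+v ≤ x))
          ((T'.erase v).filter (fun a => 2*a+2+v ≤ x)) := by
      intro T hT T' hT' hne'
      exact (hdisjE v T hT T' hT' hne').mono (Finset.filter_subset _ _)
        (Finset.filter_subset _ _)
    have hRcard : d v ≤ R.card := by
      rw [hR, Finset.card_biUnion hdisjF]
      calc d v = ∑ _T ∈ P.filter (fun T => v ∈ T), 1 := by
            rw [Finset.sum_const, smul_eq_mul, mul_one]
        _ ≤ _ := Finset.sum_le_sum hne
    have hRsub : R ⊆ (Finset.range ((x-v)/2)).erase v := by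
      intro a ha
      rw [hR, Finset.mem_biUnion] at ha
      obtain ⟨T, hTQ, haf⟩ := ha
      rw [Finset.mem_filter, Finset.mem_erase] at haf
      rw [Finset.mem_erase, Finset.mem_range]
      exact ⟨haf.1.1, by omega⟩
    have hcard2 := le_trans hRcard (Finset.card_le_card hRsub)
    by_cases h3v : 3*v+2 ≤ x
    · have hvmem : v ∈ Finset.range ((x-v)/2) := Finset.mem_range.mpr (by omega)
      rw [Finset.card_erase_of_mem hvmem, Finset.card_range] at hcard2
      rw [if_pos h3v]
      omega
    · have hce : ((Finset.range ((x-v)/2)).erase v).card ≤ (x-v)/2 := by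
        calc ((Finset.range ((x-v)/2)).erase v).card ≤ (Finset.range ((x-v)/2)).card :=
              Finset.card_le_card (Finset.erase_subset _ _)
          _ = (x-v)/2 := Finset.card_range _
      rw [if_neg h3v]
      omega
  have hemu : ∀ u ∈ Finset.range x, d (x-1-u) ≤ mu x u := by
    intro u hu
    rw [Finset.mem_range] at hu
    have hv : x-1-u < x := by omega
    have hA := hbA _ hv
    have hB := hbB _ hv
    simp only [mu]
    split_ifs at hA hB ⊢ <;> omega
  have hNle : ∑ v ∈ Finset.range x, d v ≤ ∑ u ∈ Finset.range x, mu x u := by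
    calc ∑ v ∈ Finset.range x, d v
        = ∑ u ∈ Finset.range x, d (x-1-u) :=
          (Finset.sum_range_reflect (fun v => d v) x).symm
      _ ≤ ∑ u ∈ Finset.range x, mu x u := Finset.sum_le_sum hemu
  have hKle : (∑ u ∈ Finset.range x, u * d (x-1-u)) ≤ ∑ u ∈ Finset.range x, u * mu x u :=
    Finset.sum_le_sum (fun u hu => Nat.mul_le_mul_left u (hemu u hu))
  have hKsum : (∑ u ∈ Finset.range x, (x-1-u) * d (x-1-u))
      + (∑ u ∈ Finset.range x, u * d (x-1-u))
      = (x-1) * (∑ u ∈ Finset.range x, d (x-1-u)) := by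
    rw [← Finset.sum_add_distrib, Finset.mul_sum]
    refine Finset.sum_congr rfl (fun u hu => ?_)
    rw [Finset.mem_range] at hu
    rw [← Nat.add_mul]
    congr 1
    omega
  have hK2 : 2*(x-1)*(∑ v ∈ Finset.range x, d v)
      ≤ 3*(∑ u ∈ Finset.range x, u * d (x-1-u)) := by
    have hr1 : ∑ u ∈ Finset.range x, (x-1-u) * d (x-1-u) = ∑ v ∈ Finset.range x, v * d v :=
      Finset.sum_range_reflect (fun v => v * d v) x
    have hr2 : ∑ u ∈ Finset.range x, d (x-1-u) = ∑ v ∈ Finset.range x, d v :=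
      Finset.sum_range_reflect (fun v => d v) x
    rw [hr1, hr2] at hKsum
    have h3 : (x-1) * (∑ v ∈ Finset.range x, d v) = 3*((x-1)*p) := by
      rw [hdeg]; ring
    have h4 : 2*(x-1)*(∑ v ∈ Finset.range x, d v)
        = 2*((x-1) * (∑ v ∈ Finset.range x, d v)) := by ring
    rw [h4, h3]
    linarith [hKsum, hwsum, h3]
  have hmain := main_arith x (∑ v ∈ Finset.range x, d v)
    (∑ u ∈ Finset.range x, u * d (x-1-u)) hx hNle hK2 hKle
  rw [hdeg] at hmain
  have hkey : ((3*p : ℕ) : ℚ) ≤ phi x := by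
    obtain ⟨c, hc1, hc2⟩ : ∃ c : ℕ,
        (if x % 6 = 2 ∨ x % 6 = 3 then 6 else if x % 6 = 5 then 12 else 0) = c ∧
        (if x % 6 = 2 ∨ x % 6 = 3 then (1/2:ℚ) else if x % 6 = 5 then 1 else 0) * 12
          = (c:ℚ) := by
      split_ifs <;> exact ⟨_, rfl, by norm_num⟩
    rw [hc1] at hmain
    rw [phi]
    obtain ⟨y6, hy6⟩ : ∃ y, x/6 = y := ⟨_, rfl⟩
    rw [hy6] at hmain ⊢
    qify at hmain
    push_cast
    rw [← hc2] at hmain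
    linarith [hmain]
  constructor
  · rw [hcov]
    exact_mod_cast hkey
  · rw [Int.le_floor]
    push_cast
    have hkey' : 3*(p:ℚ) ≤ phi x := by exact_mod_cast hkey
    linarith [hkey']
end

section
/- Fix σ ∈ Z_v and let B_σ be the family of (t+1)-subsets S of Z_v whose element-sum is congruent to σ modulo v. Then B_σ is a t-(v,t+1,1) packing: every t-subset of Z_v is contained in at most one member of B_σ. -/
/-- Fix `σ ∈ Z_v`.  The family `B_σ` of `(t+1)`-subsets of `Z_v` whose element-sum is
`σ` is a `t`-`(v,t+1,1)` packing: every `t`-subset of `Z_v` lies in at most one member. -/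
theorem stmt_7 (v t : ℕ) (hv : 0 < v) (σ : ZMod v)
    (T : Finset (ZMod v)) (hT : T.card = t)
    (S1 S2 : Finset (ZMod v))
    (hS1 : S1.card = t + 1) (hsum1 : S1.sum id = σ) (hTS1 : T ⊆ S1)
    (hS2 : S2.card = t + 1) (hsum2 : S2.sum id = σ) (hTS2 : T ⊆ S2) :
    S1 = S2 := by
  have h1 : (S1 \ T).card = 1 := by
    rw [Finset.card_sdiff_of_subset hTS1, hS1, hT]; omega
  have h2 : (S2 \ T).card = 1 := by
    rw [Finset.card_sdiff_of_subset hTS2, hS2, hT]; omega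
  obtain ⟨x, hx⟩ := Finset.card_eq_one.mp h1
  obtain ⟨y, hy⟩ := Finset.card_eq_one.mp h2
  have hS1eq : S1 = insert x T := by
    simp [Finset.insert_eq, ← hx, Finset.sdiff_union_of_subset hTS1]
  have hS2eq : S2 = insert y T := by
    simp [Finset.insert_eq, ← hy, Finset.sdiff_union_of_subset hTS2]
  have hxT : x ∉ T := by
    have : x ∈ S1 \ T := hx ▸ Finset.mem_singleton_self x
    exact (Finset.mem_sdiff.mp this).2
  have hyT : y ∉ T := by
    have : y ∈ S2 \ T := hy ▸ Finset.mem_singleton_self y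
    exact (Finset.mem_sdiff.mp this).2
  have hs1 : x + T.sum id = σ := by
    rw [hS1eq, Finset.sum_insert hxT] at hsum1; exact hsum1
  have hs2 : y + T.sum id = σ := by
    rw [hS2eq, Finset.sum_insert hyT] at hsum2; exact hsum2
  have : x = y := by
    have := hs1.trans hs2.symm
    exact add_right_cancel this
  rw [hS1eq, hS2eq, this]
end

section
/- Suppose gcd(v, t+1) = 1. Then for each σ ∈ Z_v, the number of (t+1)-subsets of Z_v whose element-sum is congruent to σ modulo v equals C(v, t+1)/v. -/
lemma stmt_8_aux (v t : ℕ) [NeZero v] (hgcd : Nat.gcd v (t + 1) = 1) (σ₁ σ₂ : ZMod v) :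
    (((Finset.univ : Finset (ZMod v)).powersetCard (t + 1)).filter
        (fun S => S.sum id = σ₁)).card =
    (((Finset.univ : Finset (ZMod v)).powersetCard (t + 1)).filter
        (fun S => S.sum id = σ₂)).card := by
  have hunit : IsUnit ((t + 1 : ℕ) : ZMod v) := by
    rw [ZMod.isUnit_iff_coprime]
    exact Nat.coprime_comm.mp hgcd
  obtain ⟨u, hu⟩ := hunit
  set α : ZMod v := u⁻¹ * (σ₂ - σ₁) with hα
  have hkey : ((t + 1 : ℕ) : ZMod v) * α = σ₂ - σ₁ := by
    rw [hα, ← hu]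
    simp [← mul_assoc]
  have hsum : ∀ (S : Finset (ZMod v)), S.card = t + 1 →
      (S.image (· + α)).sum id = S.sum id + (σ₂ - σ₁) := by
    intro S hS
    rw [Finset.sum_image (fun a _ b _ h => by simpa using h)]
    simp only [id]
    rw [Finset.sum_add_distrib, Finset.sum_const, hS, nsmul_eq_mul, hkey]
  apply Finset.card_bij' (fun S _ => S.image (· + α)) (fun S _ => S.image (· + (-α)))
  · intro S _
    rw [Finset.image_image]
    ext x; simp
  · intro S _
    rw [Finset.image_image]
    ext x; simp
  · intro S hS
    simp only [Finset.mem_filter, Finset.mem_powersetCard_univ] at hS ⊢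
    refine ⟨?_, ?_⟩
    · rw [Finset.card_image_of_injective _ (add_left_injective α), hS.1]
    · rw [hsum S hS.1, hS.2]; ring
  · intro S hS
    simp only [Finset.mem_filter, Finset.mem_powersetCard_univ] at hS ⊢
    have hc : (S.image (· + (-α))).card = t + 1 := by
      rw [Finset.card_image_of_injective _ (add_left_injective (-α)), hS.1]
    refine ⟨hc, ?_⟩
    have := hsum (S.image (· + (-α))) hc
    rw [Finset.image_image, show ((fun x => x + α) ∘ fun x => x + -α) = id by
      funext x; simp, Finset.image_id] at this
    rw [hS.2] at this
    linear_combination -this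

/-- If `gcd(v, t+1) = 1` then, for each `σ ∈ Z_v`, the number of `(t+1)`-subsets of
`Z_v` whose element-sum is `σ` equals `C(v, t+1)/v`. -/
theorem stmt_8 (v t : ℕ) [NeZero v] (hgcd : Nat.gcd v (t + 1) = 1) (σ : ZMod v) :
    (((Finset.univ : Finset (ZMod v)).powersetCard (t + 1)).filter
        (fun S => S.sum id = σ)).card = v.choose (t + 1) / v := by
  have hpart : ((Finset.univ : Finset (ZMod v)).powersetCard (t + 1)).card =
      ∑ τ : ZMod v, (((Finset.univ : Finset (ZMod v)).powersetCard (t + 1)).filter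
        (fun S => S.sum id = τ)).card :=
    Finset.card_eq_sum_card_fiberwise (fun S _ => Finset.mem_univ (S.sum id))
  rw [Finset.card_powersetCard, Finset.card_univ, ZMod.card] at hpart
  have hconst : ∀ τ : ZMod v,
      (((Finset.univ : Finset (ZMod v)).powersetCard (t + 1)).filter
        (fun S => S.sum id = τ)).card =
      (((Finset.univ : Finset (ZMod v)).powersetCard (t + 1)).filter
        (fun S => S.sum id = σ)).card := fun τ => stmt_8_aux v t hgcd τ σ
  rw [Finset.sum_congr rfl (fun τ _ => hconst τ), Finset.sum_const, Finset.card_univ,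
    ZMod.card, smul_eq_mul] at hpart
  rw [mul_comm] at hpart
  rw [hpart, Nat.mul_div_cancel _ (Nat.pos_of_ne_zero (NeZero.ne v))]
end

section
/- Let v = 2s be even with v > 18. Define a family D of 4-subsets of {0,...,2s-1} consisting of (i) all {a,b,c,s+d} with 0 ≤ a < b < c < s, 0 ≤ d < s, and a+b+c+d ≡ 2 (mod s), and (ii) all {s+a,s+b,s+c,d} with 0 ≤ a < b < c < s, 0 ≤ d < s, and a+b+c+d ≡ s−6 (mod s). Then D is a 3-(v,4,1) packing, every block of D has element-sum at least v+2 and at most 3v−6, and D has (v−4)/(v−1) · C(v,3)/C(4,3) blocks. -/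
open Finset

private lemma choose2_six (n : ℕ) : 2 * n.choose 2 = n * (n - 1) := by
  induction n with
  | zero => simp
  | succ m ih =>
    rw [Nat.choose_succ_succ, Nat.mul_add, ih, Nat.choose_one_right]
    cases m with
    | zero => simp
    | succ k => simp [Nat.succ_sub_one]; ring

private lemma choose3_six (n : ℕ) : 6 * n.choose 3 = n * (n - 1) * (n - 2) := by
  induction n with
  | zero => simp
  | succ m ih =>
    rw [Nat.choose_succ_succ, Nat.mul_add, ih]
    have h2 := choose2_six m
    cases m with
    | zero => simp
    | succ k =>
      cases k with
      | zero => simp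
      | succ j =>
        have e1 : j + 1 + 1 - 2 = j := by omega
        have e2 : j + 1 + 1 + 1 - 2 = j + 1 := by omega
        have e3 : j + 1 + 1 - 1 = j + 1 := by omega
        have e4 : j + 1 + 1 + 1 - 1 = j + 1 + 1 := by omega
        rw [e1, e3] at ih; rw [e1, e2, e3, e4]
        rw [e3] at h2
        nlinarith [h2]

private lemma exists_sorted3 {A : Finset ℕ} (h : A.card = 3) :
    ∃ a b c : ℕ, a < b ∧ b < c ∧ A = {a, b, c} := by
  obtain ⟨x, y, z, hxy, hxz, hyz, rfl⟩ := Finset.card_eq_three.mp h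
  rcases Nat.lt_trichotomy x y with h1 | h1 | h1 <;>
  rcases Nat.lt_trichotomy x z with h2 | h2 | h2 <;>
  rcases Nat.lt_trichotomy y z with h3 | h3 | h3 <;>
  first
  | omega
  | exact ⟨x, y, z, by omega, by omega,
      by ext t; simp only [Finset.mem_insert, Finset.mem_singleton]; try tauto⟩
  | exact ⟨x, z, y, by omega, by omega,
      by ext t; simp only [Finset.mem_insert, Finset.mem_singleton]; try tauto⟩
  | exact ⟨y, x, z, by omega, by omega,
      by ext t; simp only [Finset.mem_insert, Finset.mem_singleton]; try tauto⟩
  | exact ⟨y, z, x, by omega, by omega,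
      by ext t; simp only [Finset.mem_insert, Finset.mem_singleton]; try tauto⟩
  | exact ⟨z, x, y, by omega, by omega,
      by ext t; simp only [Finset.mem_insert, Finset.mem_singleton]; try tauto⟩
  | exact ⟨z, y, x, by omega, by omega,
      by ext t; simp only [Finset.mem_insert, Finset.mem_singleton]; try tauto⟩

private lemma sum3 {a b c : ℕ} (hab : a < b) (hbc : b < c) :
    ({a, b, c} : Finset ℕ).sum id = a + b + c ∧ ({a, b, c} : Finset ℕ).card = 3 := by
  have h1 : a ∉ ({b, c} : Finset ℕ) := by simp; omega
  have h2 : b ∉ ({c} : Finset ℕ) := by simp; omega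
  constructor
  · rw [show ({a,b,c} : Finset ℕ) = insert a (insert b {c}) from rfl,
      sum_insert h1, sum_insert h2, sum_singleton]
    simp only [id]; omega
  · rw [show ({a,b,c} : Finset ℕ) = insert a (insert b {c}) from rfl,
      card_insert_of_notMem h1, card_insert_of_notMem h2, card_singleton]

private lemma struct_blk1 {s a b c d : ℕ} (hab : a < b) (hbc : b < c) (hcs : c < s)
    (hds : d < s) :
    ({a, b, c, s + d} : Finset ℕ).card = 4 ∧
    ({a, b, c, s + d} : Finset ℕ) ⊆ Finset.range (2 * s) ∧
    ({a, b, c, s + d} : Finset ℕ).sum id = a + b + c + d + s ∧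
    (({a, b, c, s + d} : Finset ℕ).filter (fun x => s ≤ x)) = {s + d} ∧
    (({a, b, c, s + d} : Finset ℕ).filter (fun x => x < s)) = {a, b, c} := by
  have h1 : a ∉ ({b, c, s + d} : Finset ℕ) := by simp; omega
  have h2 : b ∉ ({c, s + d} : Finset ℕ) := by simp; omega
  have h3 : c ∉ ({s + d} : Finset ℕ) := by simp; omega
  have hB : ({a, b, c, s + d} : Finset ℕ) = insert a (insert b (insert c {s + d})) := rfl
  refine ⟨?_, ?_, ?_, ?_, ?_⟩
  · rw [hB, card_insert_of_notMem h1, card_insert_of_notMem h2,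
      card_insert_of_notMem h3, card_singleton]
  · intro x hx
    simp only [hB, mem_insert, mem_singleton] at hx
    simp only [mem_range]
    omega
  · rw [hB, sum_insert h1, sum_insert h2, sum_insert h3, sum_singleton]
    simp only [id]; omega
  · rw [hB, filter_insert, if_neg (by omega), filter_insert, if_neg (by omega),
      filter_insert, if_neg (by omega), filter_singleton, if_pos (by omega)]
  · rw [hB, filter_insert, if_pos (by omega), filter_insert, if_pos (by omega),
      filter_insert, if_pos (by omega), filter_singleton, if_neg (by omega)]
    rfl

private lemma struct_blk2 {s a b c d : ℕ} (hab : a < b) (hbc : b < c) (hcs : c < s)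
    (hds : d < s) :
    ({s + a, s + b, s + c, d} : Finset ℕ).card = 4 ∧
    ({s + a, s + b, s + c, d} : Finset ℕ) ⊆ Finset.range (2 * s) ∧
    ({s + a, s + b, s + c, d} : Finset ℕ).sum id = a + b + c + d + 3 * s ∧
    (({s + a, s + b, s + c, d} : Finset ℕ).filter (fun x => s ≤ x)) = {s + a, s + b, s + c} ∧
    (({s + a, s + b, s + c, d} : Finset ℕ).filter (fun x => x < s)) = {d} := by
  have h1 : s + a ∉ ({s + b, s + c, d} : Finset ℕ) := by simp; omega
  have h2 : s + b ∉ ({s + c, d} : Finset ℕ) := by simp; omega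
  have h3 : s + c ∉ ({d} : Finset ℕ) := by simp; omega
  have hB : ({s + a, s + b, s + c, d} : Finset ℕ)
      = insert (s + a) (insert (s + b) (insert (s + c) {d})) := rfl
  refine ⟨?_, ?_, ?_, ?_, ?_⟩
  · rw [hB, card_insert_of_notMem h1, card_insert_of_notMem h2,
      card_insert_of_notMem h3, card_singleton]
  · intro x hx
    simp only [hB, mem_insert, mem_singleton] at hx
    simp only [mem_range]
    omega
  · rw [hB, sum_insert h1, sum_insert h2, sum_insert h3, sum_singleton]
    simp only [id]; omega
  · rw [hB, filter_insert, if_pos (by omega), filter_insert, if_pos (by omega),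
      filter_insert, if_pos (by omega), filter_singleton, if_neg (by omega)]
    rfl
  · rw [hB, filter_insert, if_neg (by omega), filter_insert, if_neg (by omega),
      filter_insert, if_neg (by omega), filter_singleton, if_pos (by omega)]

private def dd1 (s m : ℕ) : ℕ := ((2 : ZMod s) - (m : ZMod s)).val

private def dd2 (s m : ℕ) : ℕ := (((s - 6 : ℕ) : ZMod s) - (m : ZMod s)).val

private lemma dd1_lt {s : ℕ} (hs : 0 < s) (m : ℕ) : dd1 s m < s := by
  haveI : NeZero s := ⟨hs.ne'⟩
  exact ZMod.val_lt _

private lemma dd2_lt {s : ℕ} (hs : 0 < s) (m : ℕ) : dd2 s m < s := by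
  haveI : NeZero s := ⟨hs.ne'⟩
  exact ZMod.val_lt _

private lemma dd1_mod {s : ℕ} (hs : 0 < s) (m : ℕ) : (m + dd1 s m) % s = 2 % s := by
  haveI : NeZero s := ⟨hs.ne'⟩
  have h : ((m + dd1 s m : ℕ) : ZMod s) = ((2 : ℕ) : ZMod s) := by
    push_cast [dd1, ZMod.natCast_val, ZMod.cast_id]
    ring
  exact (ZMod.natCast_eq_natCast_iff _ _ _).mp h

private lemma dd2_mod {s : ℕ} (hs : 0 < s) (m : ℕ) : (m + dd2 s m) % s = (s - 6) % s := by
  haveI : NeZero s := ⟨hs.ne'⟩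
  have h : ((m + dd2 s m : ℕ) : ZMod s) = (((s - 6 : ℕ)) : ZMod s) := by
    push_cast [dd2, ZMod.natCast_val, ZMod.cast_id]
    ring
  exact (ZMod.natCast_eq_natCast_iff _ _ _).mp h

private lemma dd1_eq {s m d : ℕ} (hs : 0 < s) (hd : d < s)
    (hmod : (m + d) % s = 2 % s) : dd1 s m = d := by
  haveI : NeZero s := ⟨hs.ne'⟩
  have h : ((m + d : ℕ) : ZMod s) = ((2 : ℕ) : ZMod s) :=
    (ZMod.natCast_eq_natCast_iff _ _ _).mpr hmod
  push_cast at h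
  have h2 : (2 : ZMod s) - (m : ZMod s) = (d : ZMod s) := by linear_combination h.symm
  rw [dd1, h2, ZMod.val_cast_of_lt hd]

private lemma dd2_eq {s m d : ℕ} (hs : 0 < s) (hd : d < s)
    (hmod : (m + d) % s = (s - 6) % s) : dd2 s m = d := by
  haveI : NeZero s := ⟨hs.ne'⟩
  have h : ((m + d : ℕ) : ZMod s) = (((s - 6 : ℕ)) : ZMod s) :=
    (ZMod.natCast_eq_natCast_iff _ _ _).mpr hmod
  push_cast at h
  have h2 : (((s - 6 : ℕ)) : ZMod s) - (m : ZMod s) = (d : ZMod s) := by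
    linear_combination h.symm
  rw [dd2, h2, ZMod.val_cast_of_lt hd]

/-- For even `v = 2s > 18`, the family `D` of 4-subsets of `{0,…,2s-1}` consisting of
all `{a,b,c,s+d}` with `0 ≤ a < b < c < s`, `0 ≤ d < s`, `a+b+c+d ≡ 2 (mod s)`, and all
`{s+a,s+b,s+c,d}` with `0 ≤ a < b < c < s`, `0 ≤ d < s`, `a+b+c+d ≡ s−6 (mod s)`, is a
`3`-`(v,4,1)` packing, every block has element-sum between `v+2` and `3v−6`, and `D` has
`(v−4)/(v−1)·C(v,3)/C(4,3)` blocks. -/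
theorem stmt_10 (s v : ℕ) (hv : v = 2 * s) (h18 : 18 < v)
    (D : Finset (Finset ℕ))
    (hD : ∀ B : Finset ℕ, B ∈ D ↔
      ((∃ a b c d : ℕ, a < b ∧ b < c ∧ c < s ∧ d < s ∧
          (a + b + c + d) % s = 2 % s ∧ B = {a, b, c, s + d}) ∨
       (∃ a b c d : ℕ, a < b ∧ b < c ∧ c < s ∧ d < s ∧
          (a + b + c + d) % s = (s - 6) % s ∧ B = {s + a, s + b, s + c, d}))) :
    (∀ B ∈ D, B ⊆ Finset.range v ∧ B.card = 4) ∧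
    (∀ T : Finset ℕ, T.card = 3 → ∀ B1 ∈ D, ∀ B2 ∈ D, T ⊆ B1 → T ⊆ B2 → B1 = B2) ∧
    (∀ B ∈ D, v + 2 ≤ B.sum id ∧ B.sum id ≤ 3 * v - 6) ∧
    ((D.card : ℚ) = ((v : ℚ) - 4) / ((v : ℚ) - 1) * (v.choose 3 : ℚ) / ((4).choose 3 : ℚ)) := by
  subst hv
  have hs : 10 ≤ s := by omega
  have hs0 : 0 < s := by omega
  have key : ∀ B ∈ D, B.card = 4 ∧ B ⊆ Finset.range (2 * s) ∧
      (2 * s + 2 ≤ B.sum id ∧ B.sum id ≤ 6 * s - 6) ∧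
      (((B.filter (fun t => s ≤ t)).card = 1 ∧ B.sum id % s = 2 % s) ∨
       ((B.filter (fun t => s ≤ t)).card = 3 ∧ B.sum id % s = (s - 6) % s)) := by
    intro B hB
    rcases (hD B).mp hB with ⟨a, b, c, d, hab, hbc, hcs, hds, hmod, rfl⟩ |
      ⟨a, b, c, d, hab, hbc, hcs, hds, hmod, rfl⟩
    · obtain ⟨hc4, hsub, hsum, hfb, -⟩ := struct_blk1 hab hbc hcs hds
      have h2s : 2 % s = 2 := Nat.mod_eq_of_lt (by omega)
      have hm3 : 3 ≤ a + b + c + d := by omega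
      have hm4 : a + b + c + d ≤ 4 * s - 7 := by omega
      have hdm := Nat.div_add_mod (a + b + c + d) s
      rw [hmod, h2s] at hdm
      have hq1 : 1 ≤ (a + b + c + d) / s := by
        rcases Nat.eq_zero_or_pos ((a + b + c + d) / s) with h | h
        · rw [h] at hdm; simp at hdm; omega
        · exact h
      have hsq : s ≤ s * ((a + b + c + d) / s) := Nat.le_mul_of_pos_right s hq1
      obtain ⟨t, ht⟩ : ∃ t, s * ((a + b + c + d) / s) = t := ⟨_, rfl⟩
      rw [ht] at hdm hsq
      refine ⟨hc4, hsub, ⟨?_, ?_⟩, Or.inl ⟨by rw [hfb, card_singleton], ?_⟩⟩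
      · omega
      · omega
      · rw [hsum, Nat.add_mod_right]; exact hmod
    · obtain ⟨hc4, hsub, hsum, hfb, -⟩ := struct_blk2 hab hbc hcs hds
      have h6s : (s - 6) % s = s - 6 := Nat.mod_eq_of_lt (by omega)
      have hm4 : a + b + c + d ≤ 4 * s - 7 := by omega
      have hdm := Nat.div_add_mod (a + b + c + d) s
      rw [hmod, h6s] at hdm
      have hq2 : (a + b + c + d) / s ≤ 2 := by
        by_contra h
        push_neg at h
        have h3 : s * 3 ≤ s * ((a + b + c + d) / s) := Nat.mul_le_mul_left s h
        obtain ⟨t, ht⟩ : ∃ t, s * ((a + b + c + d) / s) = t := ⟨_, rfl⟩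
        rw [ht] at hdm h3
        omega
      have hsq : s * ((a + b + c + d) / s) ≤ s * 2 := Nat.mul_le_mul_left s hq2
      obtain ⟨t, ht⟩ : ∃ t, s * ((a + b + c + d) / s) = t := ⟨_, rfl⟩
      rw [ht] at hdm hsq
      have hcard3 : ({s + a, s + b, s + c} : Finset ℕ).card = 3 := by
        have h1 : s + a ∉ ({s + b, s + c} : Finset ℕ) := by simp; omega
        have h2 : s + b ∉ ({s + c} : Finset ℕ) := by simp; omega
        rw [show ({s + a, s + b, s + c} : Finset ℕ)
            = insert (s + a) (insert (s + b) {s + c}) from rfl,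
          card_insert_of_notMem h1, card_insert_of_notMem h2, card_singleton]
      refine ⟨hc4, hsub, ⟨?_, ?_⟩, Or.inr ⟨by rw [hfb, hcard3], ?_⟩⟩
      · omega
      · omega
      · rw [hsum,
          show a + b + c + d + 3 * s = a + b + c + d + s * 3 by ring,
          Nat.add_mul_mod_self_left]
        exact hmod
  refine ⟨?_, ?_, ?_, ?_⟩
  · intro B hB
    obtain ⟨h4, hsub, -, -⟩ := key B hB
    exact ⟨hsub, h4⟩
  · -- packing
    intro T hT B1 hB1 B2 hB2 hTB1 hTB2
    obtain ⟨h41, hsub1, -, hkey1⟩ := key B1 hB1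
    obtain ⟨h42, hsub2, -, hkey2⟩ := key B2 hB2
    have hex : ∀ (B : Finset ℕ), T ⊆ B → B.card = 4 → ∃ x, x ∉ T ∧ B = insert x T := by
      intro B hTB h4
      have hcard : (B \ T).card = 1 := by rw [card_sdiff_of_subset hTB, h4, hT]
      obtain ⟨x, hx⟩ := Finset.card_eq_one.mp hcard
      refine ⟨x, ?_, ?_⟩
      · have := mem_sdiff.mp (hx ▸ Finset.mem_singleton_self x)
        exact this.2
      · have h := Finset.sdiff_union_of_subset hTB
        rw [hx] at h
        rw [← h, ← Finset.insert_eq]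
    obtain ⟨x, hxT, rfl⟩ := hex B1 hTB1 h41
    obtain ⟨y, hyT, rfl⟩ := hex B2 hTB2 h42
    have hx2s : x < 2 * s := by
      have := hsub1 (Finset.mem_insert_self x T); simpa using this
    have hy2s : y < 2 * s := by
      have := hsub2 (Finset.mem_insert_self y T); simpa using this
    have hxf : ∀ z : ℕ, z ∉ T → ((insert z T).filter (fun t => s ≤ t)).card
        = (T.filter (fun t => s ≤ t)).card + (if s ≤ z then 1 else 0) := by
      intro z hz
      rw [filter_insert]
      split_ifs with h
      · rw [card_insert_of_notMem (fun hmem => hz (Finset.mem_filter.mp hmem).1)]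
      · rfl
    have hsx : (insert x T).sum id = x + T.sum id := by
      rw [sum_insert hxT]; rfl
    have hsy : (insert y T).sum id = y + T.sum id := by
      rw [sum_insert hyT]; rfl
    have final : (x + T.sum id) % s = (y + T.sum id) % s →
        ((insert x T).filter (fun t => s ≤ t)).card
          = ((insert y T).filter (fun t => s ≤ t)).card →
        x = y := by
      intro hmod hcardeq
      have hmodeq : x % s = y % s := Nat.ModEq.add_right_cancel' _ hmod
      rw [hxf x hxT, hxf y hyT] at hcardeq
      by_cases hxb : s ≤ x <;> by_cases hyb : s ≤ y
      · have ex : x % s = x - s := by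
          rw [Nat.mod_eq_sub_mod hxb, Nat.mod_eq_of_lt (by omega)]
        have ey : y % s = y - s := by
          rw [Nat.mod_eq_sub_mod hyb, Nat.mod_eq_of_lt (by omega)]
        omega
      · rw [if_pos hxb, if_neg hyb] at hcardeq; omega
      · rw [if_neg hxb, if_pos hyb] at hcardeq; omega
      · rw [Nat.mod_eq_of_lt (by omega), Nat.mod_eq_of_lt (by omega)] at hmodeq
        exact hmodeq
    have hxeqy : x = y := by
      rcases hkey1 with ⟨hc1, h1⟩ | ⟨hc1, h1⟩ <;> rcases hkey2 with ⟨hc2, h2⟩ | ⟨hc2, h2⟩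
      · rw [hsx] at h1; rw [hsy] at h2
        exact final (h1.trans h2.symm) (hc1.trans hc2.symm)
      · exfalso
        rw [hxf x hxT] at hc1; rw [hxf y hyT] at hc2
        split_ifs at hc1 hc2 <;> omega
      · exfalso
        rw [hxf x hxT] at hc1; rw [hxf y hyT] at hc2
        split_ifs at hc1 hc2 <;> omega
      · rw [hsx] at h1; rw [hsy] at h2
        exact final (h1.trans h2.symm) (hc1.trans hc2.symm)
    rw [hxeqy]
  · intro B hB
    obtain ⟨-, -, ⟨hlo, hhi⟩, -⟩ := key B hB
    exact ⟨by omega, by omega⟩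
  · -- counting
    classical
    have himg : D = ((range s).powersetCard 3).image
        (fun A => insert (s + dd1 s (A.sum id)) A) ∪
        ((range s).powersetCard 3).image
        (fun A => insert (dd2 s (A.sum id)) (A.image (fun t => s + t))) := by
      ext B
      simp only [Finset.mem_union, Finset.mem_image, Finset.mem_powersetCard]
      constructor
      · intro hB
        rcases (hD B).mp hB with ⟨a, b, c, d, hab, hbc, hcs, hds, hmod, rfl⟩ |
          ⟨a, b, c, d, hab, hbc, hcs, hds, hmod, rfl⟩
        · left
          obtain ⟨hsum3, hcard3⟩ := sum3 hab hbc
          refine ⟨{a, b, c}, ⟨?_, hcard3⟩, ?_⟩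
          · intro t ht
            simp only [mem_insert, mem_singleton] at ht
            simp only [mem_range]
            omega
          · rw [hsum3, dd1_eq hs0 hds hmod]
            ext t
            simp only [mem_insert, mem_singleton]
            tauto
        · right
          obtain ⟨hsum3, hcard3⟩ := sum3 hab hbc
          refine ⟨{a, b, c}, ⟨?_, hcard3⟩, ?_⟩
          · intro t ht
            simp only [mem_insert, mem_singleton] at ht
            simp only [mem_range]
            omega
          · rw [hsum3, dd2_eq hs0 hds hmod]
            have himage : ({a, b, c} : Finset ℕ).image (fun t => s + t)
                = {s + a, s + b, s + c} := by
              ext t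
              simp only [mem_image, mem_insert, mem_singleton]
              constructor
              · rintro ⟨u, hu, rfl⟩; tauto
              · rintro (rfl | rfl | rfl)
                exacts [⟨a, by tauto⟩, ⟨b, by tauto⟩, ⟨c, by tauto⟩]
            rw [himage]
            ext t
            simp only [mem_insert, mem_singleton]
            tauto
      · rintro (⟨A, ⟨hAsub, hA3⟩, rfl⟩ | ⟨A, ⟨hAsub, hA3⟩, rfl⟩)
        · obtain ⟨a, b, c, hab, hbc, rfl⟩ := exists_sorted3 hA3
          obtain ⟨hsum3, -⟩ := sum3 hab hbc
          have hcs : c < s := by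
            have := hAsub (by simp : c ∈ ({a, b, c} : Finset ℕ))
            simpa using this
          rw [hsum3]
          refine (hD _).mpr (Or.inl ⟨a, b, c, dd1 s (a + b + c), hab, hbc, hcs,
            dd1_lt hs0 _, dd1_mod hs0 _, ?_⟩)
          ext t
          simp only [mem_insert, mem_singleton]
          tauto
        · obtain ⟨a, b, c, hab, hbc, rfl⟩ := exists_sorted3 hA3
          obtain ⟨hsum3, -⟩ := sum3 hab hbc
          have hcs : c < s := by
            have := hAsub (by simp : c ∈ ({a, b, c} : Finset ℕ))
            simpa using this
          rw [hsum3]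
          refine (hD _).mpr (Or.inr ⟨a, b, c, dd2 s (a + b + c), hab, hbc, hcs,
            dd2_lt hs0 _, dd2_mod hs0 _, ?_⟩)
          have himage : ({a, b, c} : Finset ℕ).image (fun t => s + t)
              = {s + a, s + b, s + c} := by
            ext t
            simp only [mem_image, mem_insert, mem_singleton]
            constructor
            · rintro ⟨u, hu, rfl⟩; tauto
            · rintro (rfl | rfl | rfl)
              exacts [⟨a, by tauto⟩, ⟨b, by tauto⟩, ⟨c, by tauto⟩]
          rw [himage]
          ext t
          simp only [mem_insert, mem_singleton]
          tauto
    have hf1small : ∀ A ∈ (range s).powersetCard 3,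
        ((insert (s + dd1 s (A.sum id)) A).filter (fun t => t < s)) = A := by
      intro A hA
      rw [Finset.mem_powersetCard] at hA
      rw [filter_insert, if_neg (by omega)]
      exact filter_true_of_mem (fun x hx => by have := hA.1 hx; simpa using this)
    have hf2small : ∀ A ∈ (range s).powersetCard 3,
        ((insert (dd2 s (A.sum id)) (A.image (fun t => s + t))).filter (fun t => t < s))
          = {dd2 s (A.sum id)} := by
      intro A hA
      rw [filter_insert, if_pos (dd2_lt hs0 _)]
      have hempty : (A.image (fun t => s + t)).filter (fun t => t < s) = ∅ := by
        rw [Finset.filter_eq_empty_iff]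
        rintro t ht
        simp only [mem_image] at ht
        obtain ⟨u, -, rfl⟩ := ht
        omega
      rw [hempty]
      rfl
    have hf2big : ∀ A ∈ (range s).powersetCard 3,
        ((insert (dd2 s (A.sum id)) (A.image (fun t => s + t))).filter (fun t => s ≤ t))
          = A.image (fun t => s + t) := by
      intro A hA
      rw [filter_insert, if_neg (by have := dd2_lt hs0 (A.sum id); omega)]
      exact filter_true_of_mem (fun x hx => by
        simp only [mem_image] at hx
        obtain ⟨u, -, rfl⟩ := hx
        omega)
    have hcard1 : (((range s).powersetCard 3).image
        (fun A => insert (s + dd1 s (A.sum id)) A)).card = s.choose 3 := by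
      rw [Finset.card_image_of_injOn, Finset.card_powersetCard, Finset.card_range]
      intro A hA A' hA' hEq
      have h1 := hf1small A hA
      have h2 := hf1small A' hA'
      rw [← h1, ← h2]
      simp only at hEq
      rw [hEq]
    have hinjadd : Function.Injective (fun t : ℕ => s + t) := fun a b h => by
      simpa using h
    have hcard2 : (((range s).powersetCard 3).image
        (fun A => insert (dd2 s (A.sum id)) (A.image (fun t => s + t)))).card
          = s.choose 3 := by
      rw [Finset.card_image_of_injOn, Finset.card_powersetCard, Finset.card_range]
      intro A hA A' hA' hEq
      have h1 := hf2big A hA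
      have h2 := hf2big A' hA'
      simp only at hEq
      rw [hEq] at h1
      rw [h2] at h1
      exact (Finset.image_injective hinjadd h1).symm
    have hdisj : Disjoint (((range s).powersetCard 3).image
        (fun A => insert (s + dd1 s (A.sum id)) A))
        (((range s).powersetCard 3).image
        (fun A => insert (dd2 s (A.sum id)) (A.image (fun t => s + t)))) := by
      rw [Finset.disjoint_left]
      rintro B hB1 hB2
      simp only [mem_image] at hB1 hB2
      obtain ⟨A, hA, rfl⟩ := hB1
      obtain ⟨A', hA', hEq⟩ := hB2
      have h1 := hf1small A hA
      have h2 := hf2small A' hA'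
      rw [hEq, h1] at h2
      have h3 := (Finset.mem_powersetCard.mp hA).2
      rw [h2] at h3
      simp at h3
    rw [himg, card_union_of_disjoint hdisj, hcard1, hcard2]
    -- numerical identity
    have e1 : ((s - 1 : ℕ) : ℚ) = (s : ℚ) - 1 := by
      rw [Nat.cast_sub (by omega)]; norm_num
    have e2 : ((s - 2 : ℕ) : ℚ) = (s : ℚ) - 2 := by
      rw [Nat.cast_sub (by omega)]; norm_num
    have e3 : ((2 * s - 1 : ℕ) : ℚ) = 2 * (s : ℚ) - 1 := by
      rw [Nat.cast_sub (by omega)]; push_cast; ring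
    have e4 : ((2 * s - 2 : ℕ) : ℚ) = 2 * (s : ℚ) - 2 := by
      rw [Nat.cast_sub (by omega)]; push_cast; ring
    have hq1 : ((s.choose 3 : ℕ) : ℚ) * 6 = (s : ℚ) * ((s : ℚ) - 1) * ((s : ℚ) - 2) := by
      have h := congrArg (Nat.cast : ℕ → ℚ) (choose3_six s)
      push_cast at h
      rw [e1, e2] at h
      linarith
    have hq2 : (((2 * s).choose 3 : ℕ) : ℚ) * 6
        = (2 * (s : ℚ)) * (2 * (s : ℚ) - 1) * (2 * (s : ℚ) - 2) := by
      have h := congrArg (Nat.cast : ℕ → ℚ) (choose3_six (2 * s))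
      push_cast at h
      rw [e3, e4] at h
      push_cast at h
      linarith
    have hchoose43 : ((Nat.choose 4 3 : ℕ) : ℚ) = 4 := by norm_num
    have hxs : (10 : ℚ) ≤ (s : ℚ) := by exact_mod_cast hs
    have hne : 2 * (s : ℚ) - 1 ≠ 0 := by intro h; linarith
    rw [hchoose43]
    push_cast
    have hne4 : (2 * (s : ℚ) - 1) * 4 ≠ 0 := mul_ne_zero hne (by norm_num)
    rw [div_mul_eq_mul_div, div_div, eq_div_iff hne4]
    linear_combination (4 * (2 * (s : ℚ) - 1) / 3) * hq1 - ((2 * (s : ℚ) - 4) / 6) * hq2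
end

section
/- Suppose v ≡ 1 or 3 (mod 6), and suppose that for every prime p dividing v−2, the multiplicative order of −2 modulo p is singly even (i.e., ≡ 2 (mod 4)). Then there exists a Steiner triple system of order v on point set {0,...,v−1} in which every block has element-sum at least v−2 and at most 2v+2; in particular its DiffSum is at most v+4. -/
set_option maxHeartbeats 1000000

lemma period_even (n : ℕ) [NeZero n]
    (horder : ∀ p : ℕ, p.Prime → p ∣ n → orderOf (-2 : ZMod p) % 4 = 2)
    {x : ZMod n} (hx : x ≠ 0) {k : ℕ} (hk : 0 < k) (h : (-2 : ZMod n)^k * x = x) :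
    Even k := by
  set m : ℤ := (-2)^k - 1 with hm
  have hmz : ((m : ℤ) : ZMod n) * x = 0 := by
    push_cast [hm]
    rw [sub_mul, h]
    ring
  have hnc : ¬ (Nat.Coprime m.natAbs n) := by
    intro hc
    have hu : IsUnit ((m.natAbs : ℕ) : ZMod n) := (ZMod.isUnit_iff_coprime _ n).mpr hc
    have hu2 : IsUnit ((m : ℤ) : ZMod n) := by
      rcases Int.natAbs_eq m with he | he
      · rw [he, Int.cast_natCast]; exact hu
      · rw [he, Int.cast_neg, Int.cast_natCast]; exact hu.neg
    exact hx ((hu2.mul_right_eq_zero).mp hmz)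
  have hg2 : 2 ≤ Nat.gcd m.natAbs n := by
    have h1 : Nat.gcd m.natAbs n ≠ 1 := hnc
    have h0 : Nat.gcd m.natAbs n ≠ 0 := by
      intro h0
      exact (NeZero.ne n) (Nat.eq_zero_of_gcd_eq_zero_right h0)
    omega
  obtain ⟨p, hp, hpg⟩ := Nat.exists_prime_and_dvd (by omega : Nat.gcd m.natAbs n ≠ 1)
  have hpn : p ∣ n := hpg.trans (Nat.gcd_dvd_right _ _)
  have hpm : (p : ℤ) ∣ m := (Int.natCast_dvd_natCast.mpr (hpg.trans (Nat.gcd_dvd_left _ _))).trans (Int.natAbs_dvd.mpr dvd_rfl)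
  have hord : orderOf (-2 : ZMod p) ∣ k := by
    have : ((m : ℤ) : ZMod p) = 0 := by
      exact_mod_cast (ZMod.intCast_zmod_eq_zero_iff_dvd m p).mpr hpm
    have hpe : (-2 : ZMod p)^k = 1 := by
      push_cast [hm] at this
      linear_combination this
    exact orderOf_dvd_of_pow_eq_one hpe
  have h2 : orderOf (-2 : ZMod p) % 4 = 2 := horder p hp hpn
  have : 2 ∣ orderOf (-2 : ZMod p) := by omega
  exact (even_iff_two_dvd).mpr (this.trans hord)


lemma exists_chi (n : ℕ) [NeZero n] (hu : IsUnit (-2 : ZMod n))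
    (heven : ∀ x : ZMod n, x ≠ 0 → ∀ k : ℕ, 0 < k → (-2)^k * x = x → Even k) :
    ∃ χ : ZMod n → Bool, ∀ x : ZMod n, x ≠ 0 → χ (-2 * x) = !(χ x) := by
  classical
  obtain ⟨N, hN, hNe⟩ : ∃ N : ℕ, 0 < N ∧ (-2 : ZMod n)^N = 1 := by
    refine ⟨orderOf hu.unit, orderOf_pos _, ?_⟩
    have h1 : (hu.unit ^ orderOf hu.unit : (ZMod n)ˣ) = 1 := pow_orderOf_eq_one _
    calc (-2 : ZMod n)^orderOf hu.unit = ((hu.unit : ZMod n))^orderOf hu.unit := by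
          rw [hu.unit_spec]
      _ = ((hu.unit ^ orderOf hu.unit : (ZMod n)ˣ) : ZMod n) := by push_cast; ring
      _ = 1 := by rw [h1]; rfl
  obtain ⟨M, rfl⟩ : ∃ M, N = M + 1 := ⟨N - 1, by omega⟩
  letI s : Setoid (ZMod n) :=
    ⟨fun x y => ∃ k : ℕ, (-2)^k * x = y, by
      constructor
      · intro x; exact ⟨0, by simp⟩
      · rintro x y ⟨k, hk⟩
        refine ⟨k * M, ?_⟩
        rw [← hk, ← mul_assoc, ← pow_add]
        have hiter : k * M + k = (M + 1) * k := by ring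
        rw [hiter, pow_mul, hNe, one_pow, one_mul]
      · rintro x y z ⟨k, hk⟩ ⟨l, hl⟩
        exact ⟨l + k, by rw [pow_add, mul_assoc, hk, hl]⟩⟩
  set rep : ZMod n → ZMod n := fun x => (⟦x⟧ : Quotient s).out with hrepdef
  have hex : ∀ x : ZMod n, ∃ k : ℕ, (-2)^k * rep x = x := by
    intro x
    exact Quotient.exact (Quotient.out_eq (⟦x⟧ : Quotient s))
  have hrepeq : ∀ x : ZMod n, rep (-2 * x) = rep x := by
    intro x
    have h2 : (⟦(-2) * x⟧ : Quotient s) = ⟦x⟧ := by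
      apply Quotient.sound
      exact Setoid.symm ⟨1, by ring⟩
    simp only [hrepdef, h2]
  refine ⟨fun x => decide (Odd (Nat.find (hex x))), ?_⟩
  intro x hx
  have hr0ne : rep x ≠ 0 := by
    intro h0
    obtain ⟨k, hk⟩ := hex x
    rw [h0, mul_zero] at hk
    exact hx hk.symm
  obtain ⟨c1, hc1⟩ : ∃ c, Nat.find (hex x) = c := ⟨_, rfl⟩
  obtain ⟨c2, hc2⟩ : ∃ c, Nat.find (hex (-2 * x)) = c := ⟨_, rfl⟩
  have p1 : (-2)^c1 * rep x = x := by
    have h := Nat.find_spec (hex x); rwa [hc1] at h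
  have p2 : (-2)^c2 * rep x = -2 * x := by
    have h := Nat.find_spec (hex (-2 * x))
    rw [hc2] at h
    rwa [hrepeq x] at h
  have p2' : (-2 : ZMod n)^c2 * rep x = (-2)^(c1+1) * rep x := by
    linear_combination p2 + 2 * p1
  have hpar : Odd c2 ↔ ¬ Odd c1 := by
    rcases le_total c2 (c1 + 1) with hle | hle
    · obtain ⟨d, hd⟩ := Nat.exists_eq_add_of_le hle
      rw [hd, pow_add, mul_assoc] at p2'
      have hcancel : rep x = (-2 : ZMod n)^d * rep x := (hu.pow c2).mul_left_cancel p2'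
      have hd2 : d % 2 = 0 := by
        rcases Nat.eq_zero_or_pos d with h0 | hdp
        · simp [h0]
        · exact Nat.even_iff.mp (heven (rep x) hr0ne d hdp hcancel.symm)
      rw [Nat.odd_iff, Nat.odd_iff]; omega
    · obtain ⟨d, hd⟩ := Nat.exists_eq_add_of_le hle
      rw [hd, pow_add, mul_assoc] at p2'
      have hcancel : (-2 : ZMod n)^d * rep x = rep x := (hu.pow (c1+1)).mul_left_cancel p2'
      have hd2 : d % 2 = 0 := by
        rcases Nat.eq_zero_or_pos d with h0 | hdp
        · simp [h0]
        · exact Nat.even_iff.mp (heven (rep x) hr0ne d hdp hcancel)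
      rw [Nat.odd_iff, Nat.odd_iff]; omega
  show decide (Odd (Nat.find (hex (-2 * x)))) = !decide (Odd (Nat.find (hex x)))
  rw [hc1, hc2, ← decide_not]
  exact decide_eq_decide.mpr hpar


namespace Stmt13

/-- three-element set card -/
lemma card3 {α : Type*} [DecidableEq α] {p q r : α} (h1 : p ≠ q) (h2 : p ≠ r) (h3 : q ≠ r) :
    ({p, q, r} : Finset α).card = 3 := by
  rw [Finset.card_insert_of_notMem (by simp [h1, h2]),
    Finset.card_insert_of_notMem (by simp [h3]), Finset.card_singleton]

lemma sum3 {M : Type*} [AddCommMonoid M] [DecidableEq M] {p q r : M}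
    (h1 : p ≠ q) (h2 : p ≠ r) (h3 : q ≠ r) :
    ({p, q, r} : Finset M).sum id = p + q + r := by
  rw [Finset.sum_insert (by simp [h1, h2]), Finset.sum_insert (by simp [h3]),
    Finset.sum_singleton]
  simp only [id_eq]
  exact (add_assoc p q r).symm

lemma third_elt {α : Type*} [DecidableEq α] {t : Finset α} (h : t.card = 3) {u w : α}
    (hu : u ∈ t) (hw : w ∈ t) (huw : u ≠ w) :
    ∃ z, z ≠ u ∧ z ≠ w ∧ t = {u, w, z} := by
  have hw' : w ∈ t.erase u := Finset.mem_erase.mpr ⟨huw.symm, hw⟩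
  have hc1 : (t.erase u).card = 2 := by
    rw [Finset.card_erase_of_mem hu, h]
  have hc2 : ((t.erase u).erase w).card = 1 := by
    rw [Finset.card_erase_of_mem hw', hc1]
  obtain ⟨z, hz⟩ := Finset.card_eq_one.mp hc2
  have hzmem : z ∈ (t.erase u).erase w := by rw [hz]; simp
  have hzw : z ≠ w := (Finset.mem_erase.mp hzmem).1
  have hzu : z ≠ u := (Finset.mem_erase.mp (Finset.mem_erase.mp hzmem).2).1
  have hzt : z ∈ t := Finset.mem_of_mem_erase (Finset.mem_of_mem_erase hzmem)
  have hsub : ({u, w, z} : Finset α) ⊆ t := by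
    intro c hc
    simp only [Finset.mem_insert, Finset.mem_singleton] at hc
    rcases hc with rfl | rfl | rfl <;> assumption
  exact ⟨z, hzu, hzw,
    (Finset.eq_of_subset_of_card_le hsub (by rw [h, card3 huw hzu.symm hzw.symm])).symm⟩

variable (n a : ℕ) [NeZero n]

def fmap (x : ZMod n) : ℕ := if x.val < a then x.val else x.val + 2

def infl (χ : ZMod n → Bool) (x : ZMod n) : ℕ := if χ x then a else a + 1

def Iblk (χ : ZMod n → Bool) (x : ZMod n) : Finset ℕ :=
  {fmap n a x, fmap n a (-2 * x), infl n a χ x}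

def Pfam : Finset (Finset ℕ) :=
  (((Finset.univ : Finset (ZMod n)).powersetCard 3).filter (fun t => t.sum id = 0)).image
    (fun t => t.image (fmap n a))

def Ifam (χ : ZMod n → Bool) : Finset (Finset ℕ) :=
  (Finset.univ.filter (fun x : ZMod n => x ≠ 0)).image (Iblk n a χ)

def BB (χ : ZMod n → Bool) : Finset (Finset ℕ) :=
  insert {0, a, a + 1} (Pfam n a ∪ Ifam n a χ)

variable {n a}

lemma f_lt (hna : n = 2 * a + 1) (x : ZMod n) : fmap n a x < n + 2 := by
  have := ZMod.val_lt x
  unfold fmap; split <;> omega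

lemma f_ne_a (hna : n = 2 * a + 1) (x : ZMod n) : fmap n a x ≠ a := by
  unfold fmap; split <;> omega

lemma f_ne_a1 (hna : n = 2 * a + 1) (x : ZMod n) : fmap n a x ≠ a + 1 := by
  unfold fmap; split <;> omega

lemma f_ge (x : ZMod n) : x.val ≤ fmap n a x := by
  unfold fmap; split <;> omega

lemma f_le (x : ZMod n) : fmap n a x ≤ x.val + 2 := by
  unfold fmap; split <;> omega

lemma f_inj : Function.Injective (fmap n a) := by
  intro x y h
  unfold fmap at h
  have : x.val = y.val := by split at h <;> split at h <;> omega
  exact ZMod.val_injective n this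

lemma f_zero (ha : 0 < a) : fmap n a 0 = 0 := by
  unfold fmap
  rw [ZMod.val_zero]
  simp [ha]

lemma f_eq_zero (ha : 0 < a) {x : ZMod n} (h : fmap n a x = 0) : x = 0 :=
  f_inj (h.trans (f_zero ha).symm)

lemma f_surj (hna : n = 2 * a + 1) {c : ℕ} (hc : c < n + 2) (h1 : c ≠ a) (h2 : c ≠ a + 1) :
    ∃ x : ZMod n, fmap n a x = c := by
  rcases lt_or_ge c a with h | h
  · refine ⟨(c : ZMod n), ?_⟩
    have hv : ((c : ℕ) : ZMod n).val = c := ZMod.val_cast_of_lt (by omega)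
    unfold fmap; rw [hv]; simp [h]
  · have hc2 : a ≤ c - 2 ∧ c - 2 < n := by omega
    refine ⟨((c - 2 : ℕ) : ZMod n), ?_⟩
    have hv : (((c - 2 : ℕ) : ℕ) : ZMod n).val = c - 2 := ZMod.val_cast_of_lt (by omega)
    unfold fmap; rw [hv]
    have : ¬ (c - 2 < a) := by omega
    simp [this]; omega

set_option linter.unusedSectionVars false
set_option linter.unusedVariables false

lemma mem_Pfam {b : Finset ℕ} :
    b ∈ Pfam n a ↔ ∃ t : Finset (ZMod n), t.card = 3 ∧ t.sum id = 0 ∧ b = t.image (fmap n a) := by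
  unfold Pfam
  simp only [Finset.mem_image, Finset.mem_filter, Finset.mem_powersetCard_univ]
  constructor
  · rintro ⟨t, ⟨h1, h2⟩, h3⟩; exact ⟨t, h1, h2, h3.symm⟩
  · rintro ⟨t, h1, h2, h3⟩; exact ⟨t, ⟨h1, h2⟩, h3.symm⟩

lemma mem_Ifam {χ : ZMod n → Bool} {b : Finset ℕ} :
    b ∈ Ifam n a χ ↔ ∃ x : ZMod n, x ≠ 0 ∧ b = Iblk n a χ x := by
  unfold Ifam
  simp only [Finset.mem_image, Finset.mem_filter, Finset.mem_univ, true_and]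
  constructor
  · rintro ⟨x, h1, h2⟩; exact ⟨x, h1, h2.symm⟩
  · rintro ⟨x, h1, h2⟩; exact ⟨x, h1, h2.symm⟩

lemma mem_BB {χ : ZMod n → Bool} {b : Finset ℕ} :
    b ∈ BB n a χ ↔ b = {0, a, a + 1} ∨ b ∈ Pfam n a ∨ b ∈ Ifam n a χ := by
  unfold BB
  simp [Finset.mem_insert, Finset.mem_union]

lemma mem_Iblk {χ : ZMod n → Bool} {x : ZMod n} {c : ℕ} :
    c ∈ Iblk n a χ x ↔ c = fmap n a x ∨ c = fmap n a (-2 * x) ∨ c = infl n a χ x := by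
  unfold Iblk
  simp [Finset.mem_insert, Finset.mem_singleton]

lemma fmem_image {t : Finset (ZMod n)} {u : ZMod n} :
    fmap n a u ∈ t.image (fmap n a) ↔ u ∈ t := by
  constructor
  · intro h
    obtain ⟨w, hw, he⟩ := Finset.mem_image.mp h
    rwa [← f_inj he]
  · intro h; exact Finset.mem_image_of_mem _ h

lemma infl_mem {χ : ZMod n → Bool} (x : ZMod n) :
    infl n a χ x = a ∨ infl n a χ x = a + 1 := by
  unfold infl; split <;> simp

lemma a_not_in_P (hna : n = 2 * a + 1) {b : Finset ℕ} (hb : b ∈ Pfam n a) :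
    a ∉ b ∧ (a + 1) ∉ b := by
  obtain ⟨t, h1, h2, rfl⟩ := mem_Pfam.mp hb
  constructor <;> intro h <;> obtain ⟨w, hw, he⟩ := Finset.mem_image.mp h
  · exact f_ne_a hna w he
  · exact f_ne_a1 hna w he

lemma main (n a : ℕ) [NeZero n] (hna : n = 2 * a + 1) (ha2 : 2 ≤ a) (h3 : ¬ (3 ∣ n))
    (χ : ZMod n → Bool) (hχ : ∀ x : ZMod n, x ≠ 0 → χ (-2 * x) = !(χ x)) :
    ∃ B : Finset (Finset ℕ),
      (∀ b ∈ B, b ⊆ Finset.range (n + 2) ∧ b.card = 3) ∧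
      (∀ x ∈ Finset.range (n + 2), ∀ y ∈ Finset.range (n + 2), x ≠ y →
        ∃! b, b ∈ B ∧ x ∈ b ∧ y ∈ b) ∧
      (∀ b ∈ B, (n + 2) - 2 ≤ b.sum id ∧ b.sum id ≤ 2 * (n + 2) + 2) ∧
      (∀ b1 ∈ B, ∀ b2 ∈ B, b1.sum id ≤ b2.sum id + ((n + 2) + 4)) := by
  classical
  -- units
  have hu2 : IsUnit (2 : ZMod n) := by
    have hcop : Nat.Coprime 2 n := (Nat.prime_two.coprime_iff_not_dvd).mpr (by omega)
    have := (ZMod.isUnit_iff_coprime 2 n).mpr hcop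
    rwa [Nat.cast_ofNat] at this
  have hu : IsUnit (-2 : ZMod n) := hu2.neg
  have h3u : IsUnit (3 : ZMod n) := by
    have hcop : Nat.Coprime 3 n := (Nat.prime_three.coprime_iff_not_dvd).mpr h3
    have := (ZMod.isUnit_iff_coprime 3 n).mpr hcop
    rwa [Nat.cast_ofNat] at this
  have h30 : ∀ x : ZMod n, 3 * x = 0 → x = 0 := by
    intro x hx
    exact h3u.mul_left_cancel (by rw [hx, mul_zero])
  have hm20 : ∀ x : ZMod n, -2 * x = 0 → x = 0 := by
    intro x hx
    exact hu.mul_left_cancel (by rw [hx, mul_zero])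
  have hm2ne : ∀ x : ZMod n, x ≠ 0 → -2 * x ≠ x := by
    intro x hx he
    exact hx (h30 x (by linear_combination -he))
  have hm2inj : ∀ x y : ZMod n, -2 * x = -2 * y → x = y := by
    intro x y hxy
    exact hu.mul_left_cancel hxy
  have hvalpos : ∀ x : ZMod n, x ≠ 0 → 1 ≤ x.val := by
    intro x hx
    have := (ZMod.val_eq_zero x).not.mpr hx
    omega
  -- the fundamental val relation for edges
  have valrel : ∀ x : ZMod n, x ≠ 0 →
      (-2 * x).val + 2 * x.val = n ∨ (-2 * x).val + 2 * x.val = 2 * n := by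
    intro x hx
    have hy0 : (-2 * x) ≠ 0 := fun h => hx (hm20 x h)
    have hdvd : n ∣ (-2 * x).val + 2 * x.val := by
      rw [← ZMod.natCast_eq_zero_iff]
      push_cast
      rw [ZMod.natCast_rightInverse x, ZMod.natCast_rightInverse (-2 * x)]
      ring
    obtain ⟨c, hc⟩ := hdvd
    have hxv := ZMod.val_lt x
    have hyv := ZMod.val_lt (-2 * x)
    have hx1 := hvalpos x hx
    have hy1 := hvalpos _ hy0
    have hc12 : c = 1 ∨ c = 2 := by
      by_contra hcon
      push_neg at hcon
      rcases Nat.lt_or_ge c 3 with hlt | hge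
      · interval_cases c <;> omega
      · have : n * 3 ≤ n * c := Nat.mul_le_mul_left n hge
        have h3n : 3 * n ≤ (-2 * x).val + 2 * x.val := by
          rw [hc]; omega
        omega
    rcases hc12 with rfl | rfl <;> omega
  -- block properties
  have hprops : ∀ b ∈ BB n a χ,
      (b ⊆ Finset.range (n + 2) ∧ b.card = 3) ∧ (n ≤ b.sum id ∧ b.sum id ≤ 2 * n + 6) := by
    intro b hb
    rcases mem_BB.mp hb with rfl | hP | hI
    · -- T0
      have d1 : (0 : ℕ) ≠ a := by omega
      have d2 : (0 : ℕ) ≠ a + 1 := by omega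
      have d3 : a ≠ a + 1 := by omega
      refine ⟨⟨?_, card3 d1 d2 d3⟩, ?_⟩
      · intro c hc
        simp only [Finset.mem_insert, Finset.mem_singleton] at hc
        rcases hc with rfl | rfl | rfl <;> (rw [Finset.mem_range]; omega)
      · rw [sum3 d1 d2 d3]; omega
    · -- pure blocks
      obtain ⟨t, ht3, hts, rfl⟩ := mem_Pfam.mp hP
      have hcard : (t.image (fmap n a)).card = 3 := by
        rw [Finset.card_image_of_injective t f_inj, ht3]
      have hsum : (t.image (fmap n a)).sum id = ∑ x ∈ t, fmap n a x := by
        rw [Finset.sum_image (fun x _ y _ h => f_inj h)]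
        rfl
      set S := ∑ x ∈ t, (ZMod.val x) with hS
      have hdvd : n ∣ S := by
        rw [← ZMod.natCast_eq_zero_iff]
        rw [hS, Nat.cast_sum]
        have : ∑ x ∈ t, ((ZMod.val x : ℕ) : ZMod n) = ∑ x ∈ t, x :=
          Finset.sum_congr rfl (fun x _ => ZMod.natCast_rightInverse x)
        rw [this]
        exact hts
      have hSub : S ≤ 3 * (n - 1) := by
        have := Finset.sum_le_card_nsmul t (fun x => ZMod.val x) (n - 1)
          (fun x _ => by show ZMod.val x ≤ n - 1; have := ZMod.val_lt x; omega)
        rw [ht3] at this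
        simpa using this
      have hSpos : 0 < S := by
        by_contra hcon
        push_neg at hcon
        have hz : ∀ x ∈ t, ZMod.val x = 0 := by
          intro x hx
          have h5 := Finset.single_le_sum (f := fun x => ZMod.val x)
            (fun i _ => Nat.zero_le _) hx
          have h6 : ZMod.val x ≤ S := by simpa [hS] using h5
          omega
        have hsub : t ⊆ {0} := by
          intro x hx
          simp only [Finset.mem_singleton]
          exact (ZMod.val_eq_zero x).mp (hz x hx)
        have := Finset.card_le_card hsub
        simp [ht3] at this
      obtain ⟨c, hc⟩ := hdvd
      have hn1 : 1 ≤ n := by omega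
      have hc12 : c = 1 ∨ c = 2 := by
        by_contra hcon
        push_neg at hcon
        rcases Nat.lt_or_ge c 3 with hlt | hge
        · interval_cases c <;> omega
        · have h1 : n * 3 ≤ n * c := Nat.mul_le_mul_left n hge
          have h2 : 3 * n ≤ S := by rw [hc]; omega
          omega
      have hlow : S ≤ ∑ x ∈ t, fmap n a x :=
        Finset.sum_le_sum (fun x _ => f_ge x)
      have hhigh : ∑ x ∈ t, fmap n a x ≤ S + 6 := by
        have h1 : ∑ x ∈ t, fmap n a x ≤ ∑ x ∈ t, (ZMod.val x + 2) :=
          Finset.sum_le_sum (fun x _ => f_le x)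
        rw [Finset.sum_add_distrib, Finset.sum_const, ht3] at h1
        simpa using h1
      refine ⟨⟨?_, hcard⟩, ?_⟩
      · intro c hc'
        obtain ⟨w, _, rfl⟩ := Finset.mem_image.mp hc'
        rw [Finset.mem_range]
        exact f_lt hna w
      · rw [hsum]
        rcases hc12 with rfl | rfl <;> omega
    · -- infinity blocks
      obtain ⟨x, hx0, rfl⟩ := mem_Ifam.mp hI
      have hy0 : -2 * x ≠ 0 := fun h => hx0 (hm20 x h)
      have d1 : fmap n a x ≠ fmap n a (-2 * x) :=
        fun h => (hm2ne x hx0) (f_inj h).symm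
      have d2 : fmap n a x ≠ infl n a χ x := by
        rcases infl_mem (χ := χ) x with h | h <;> rw [h]
        · exact f_ne_a hna x
        · exact f_ne_a1 hna x
      have d3 : fmap n a (-2 * x) ≠ infl n a χ x := by
        rcases infl_mem (χ := χ) x with h | h <;> rw [h]
        · exact f_ne_a hna (-2 * x)
        · exact f_ne_a1 hna (-2 * x)
      have hsum : (Iblk n a χ x).sum id = fmap n a x + fmap n a (-2 * x) + infl n a χ x := by
        unfold Iblk
        exact sum3 d1 d2 d3
      have hge1 := f_ge (a := a) x
      have hle1 := f_le (a := a) x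
      have hge2 := f_ge (a := a) (-2 * x)
      have hle2 := f_le (a := a) (-2 * x)
      have hX := ZMod.val_lt x
      have hY := ZMod.val_lt (-2 * x)
      have hX1 := hvalpos x hx0
      have hY1 := hvalpos _ hy0
      refine ⟨⟨?_, ?_⟩, ?_⟩
      · intro c hc'
        rcases mem_Iblk.mp hc' with rfl | rfl | rfl
        · rw [Finset.mem_range]; exact f_lt hna x
        · rw [Finset.mem_range]; exact f_lt hna (-2 * x)
        · rw [Finset.mem_range]
          rcases infl_mem (χ := χ) x with h | h <;> rw [h] <;> omega
      · unfold Iblk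
        exact card3 d1 d2 d3
      · rw [hsum]
        rcases valrel x hx0 with h | h <;>
          rcases infl_mem (χ := χ) x with h2 | h2 <;> rw [h2] <;> omega
  -- helpers for uniqueness
  have hfne_infl : ∀ z y : ZMod n, fmap n a z ≠ infl n a χ y := by
    intro z y
    rcases infl_mem (χ := χ) y with h | h <;> rw [h]
    · exact f_ne_a hna z
    · exact f_ne_a1 hna z
  have hT0mem : ∀ z : ZMod n, fmap n a z ∈ ({0, a, a + 1} : Finset ℕ) → z = 0 := by
    intro z hz
    simp only [Finset.mem_insert, Finset.mem_singleton] at hz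
    rcases hz with h | h | h
    · exact f_eq_zero (by omega) h
    · exact absurd h (f_ne_a hna z)
    · exact absurd h (f_ne_a1 hna z)
  have hT0BB : ({0, a, a + 1} : Finset ℕ) ∈ BB n a χ := mem_BB.mpr (Or.inl rfl)
  -- coverage: edges
  have cov_edge : ∀ u w : ZMod n, u ≠ w → w = -2 * u →
      ∃! b, b ∈ BB n a χ ∧ fmap n a u ∈ b ∧ fmap n a w ∈ b := by
    intro u w huw he
    have hu0 : u ≠ 0 := by
      rintro rfl
      apply huw
      rw [he, mul_zero]
    refine ⟨Iblk n a χ u, ⟨mem_BB.mpr (Or.inr (Or.inr (mem_Ifam.mpr ⟨u, hu0, rfl⟩))),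
      mem_Iblk.mpr (Or.inl rfl), mem_Iblk.mpr (Or.inr (Or.inl (by rw [he])))⟩, ?_⟩
    rintro b ⟨hb, hbu, hbw⟩
    rcases mem_BB.mp hb with rfl | hP | hI
    · exact absurd (hT0mem u hbu) hu0
    · obtain ⟨t, ht3, hts, rfl⟩ := mem_Pfam.mp hP
      have hu_t : u ∈ t := fmem_image.mp hbu
      have hw_t : w ∈ t := fmem_image.mp hbw
      obtain ⟨z, hzu, hzw, rfl⟩ := third_elt ht3 hu_t hw_t huw
      have hsum' : u + w + z = 0 := by
        rw [← sum3 huw (Ne.symm hzu) (Ne.symm hzw)]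
        exact hts
      have : z = u := by linear_combination hsum' - he
      exact absurd this hzu
    · obtain ⟨x, hx0, rfl⟩ := mem_Ifam.mp hI
      rcases mem_Iblk.mp hbu with h | h | h
      · rw [f_inj h]
      · -- u = -2x
        have hu_eq : u = -2 * x := f_inj h
        rcases mem_Iblk.mp hbw with h' | h' | h'
        · -- w = x
          have hw_eq : w = x := f_inj h'
          have huw2 : u = -2 * w := by rw [hu_eq, hw_eq]
          have h3w : 3 * w = 0 := by linear_combination 2 * huw2 - he
          have hw0 : w = 0 := h30 w h3w
          have hu0' : u = 0 := by rw [huw2, hw0, mul_zero]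
          rw [hu0', hw0] at huw
          exact absurd rfl huw
        · -- w = -2x = u, contra
          have hw_eq : w = -2 * x := f_inj h'
          rw [← hu_eq] at hw_eq
          exact absurd hw_eq.symm huw
        · exact absurd h' (hfne_infl w x)
      · exact absurd h (hfne_infl u x)
  -- swap helper
  have swap_pair : ∀ x y : ℕ, (∃! b, b ∈ BB n a χ ∧ x ∈ b ∧ y ∈ b) →
      ∃! b, b ∈ BB n a χ ∧ y ∈ b ∧ x ∈ b := by
    rintro x y ⟨b, ⟨h1, h2, h3⟩, hun⟩
    exact ⟨b, ⟨h1, h3, h2⟩, fun c ⟨k1, k2, k3⟩ => hun c ⟨k1, k3, k2⟩⟩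
  -- coverage: two finite points
  have cov_ff : ∀ u w : ZMod n, u ≠ w →
      ∃! b, b ∈ BB n a χ ∧ fmap n a u ∈ b ∧ fmap n a w ∈ b := by
    intro u w huw
    by_cases he1 : w = -2 * u
    · exact cov_edge u w huw he1
    by_cases he2 : u = -2 * w
    · exact swap_pair _ _ (cov_edge w u huw.symm he2)
    · set z := -(u + w) with hz
      have hz_u : z ≠ u := fun h => he1 (by linear_combination -h)
      have hz_w : z ≠ w := fun h => he2 (by linear_combination -h)
      have ht3 : ({u, w, z} : Finset (ZMod n)).card = 3 := card3 huw (Ne.symm hz_u) (Ne.symm hz_w)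
      have hts : ({u, w, z} : Finset (ZMod n)).sum id = 0 := by
        rw [sum3 huw (Ne.symm hz_u) (Ne.symm hz_w), hz]
        ring
      refine ⟨({u, w, z} : Finset (ZMod n)).image (fmap n a),
        ⟨mem_BB.mpr (Or.inr (Or.inl (mem_Pfam.mpr ⟨_, ht3, hts, rfl⟩))),
         Finset.mem_image_of_mem _ (by simp), Finset.mem_image_of_mem _ (by simp)⟩, ?_⟩
      rintro b ⟨hb, hbu, hbw⟩
      rcases mem_BB.mp hb with rfl | hP | hI
      · have hu0 := hT0mem u hbu
        have hw0 := hT0mem w hbw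
        rw [hu0, hw0] at huw
        exact absurd rfl huw
      · obtain ⟨t, ht3', hts', rfl⟩ := mem_Pfam.mp hP
        have hu_t : u ∈ t := fmem_image.mp hbu
        have hw_t : w ∈ t := fmem_image.mp hbw
        obtain ⟨z', hz'u, hz'w, rfl⟩ := third_elt ht3' hu_t hw_t huw
        have hsum' : u + w + z' = 0 := by
          rw [← sum3 huw (Ne.symm hz'u) (Ne.symm hz'w)]
          exact hts'
        have : z' = z := by rw [hz]; linear_combination hsum'
        rw [this]
      · obtain ⟨x, hx0, rfl⟩ := mem_Ifam.mp hI
        rcases mem_Iblk.mp hbu with h | h | h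
        · rcases mem_Iblk.mp hbw with h' | h' | h'
          · exact absurd ((f_inj h).trans (f_inj h').symm) huw
          · exact absurd (by rw [f_inj h', ← f_inj h] : w = -2 * u) he1
          · exact absurd h' (hfne_infl w x)
        · rcases mem_Iblk.mp hbw with h' | h' | h'
          · exact absurd (by rw [f_inj h, ← f_inj h'] : u = -2 * w) he2
          · exact absurd ((f_inj h).trans (f_inj h').symm) huw
          · exact absurd h' (hfne_infl w x)
        · exact absurd h (hfne_infl u x)
  -- coverage: finite point with an infinity point
  have cov_inf : ∀ (u : ZMod n) (c : ℕ), (c = a ∨ c = a + 1) →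
      ∃! b, b ∈ BB n a χ ∧ fmap n a u ∈ b ∧ c ∈ b := by
    intro u c hc
    have hcT0 : c ∈ ({0, a, a + 1} : Finset ℕ) := by
      rcases hc with rfl | rfl <;> simp
    have hcnotP : ∀ b ∈ Pfam n a, c ∉ b := by
      intro b hbP
      rcases hc with rfl | rfl
      · exact (a_not_in_P hna hbP).1
      · exact (a_not_in_P hna hbP).2
    have hcnotf : ∀ z : ZMod n, c ≠ fmap n a z := by
      intro z
      rcases hc with rfl | rfl
      · exact Ne.symm (f_ne_a hna z)
      · exact Ne.symm (f_ne_a1 hna z)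
    by_cases hu0 : u = 0
    · subst hu0
      refine ⟨{0, a, a + 1}, ⟨hT0BB, by rw [f_zero (by omega)]; simp, hcT0⟩, ?_⟩
      rintro b ⟨hb, hbu, hbc⟩
      rcases mem_BB.mp hb with rfl | hP | hI
      · rfl
      · exact absurd hbc (hcnotP b hP)
      · obtain ⟨x, hx0, rfl⟩ := mem_Ifam.mp hI
        rcases mem_Iblk.mp hbu with h | h | h
        · exact absurd (f_inj h).symm hx0
        · exact absurd (hm20 x (f_inj h).symm) hx0
        · exact absurd h (hfne_infl 0 x)
    · obtain ⟨w, hw⟩ : ∃ w : ZMod n, -2 * w = u :=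
        ⟨((hu.unit⁻¹ : (ZMod n)ˣ) : ZMod n) * u, by
          calc -2 * (((hu.unit⁻¹ : (ZMod n)ˣ) : ZMod n) * u)
              = (-2 * ((hu.unit⁻¹ : (ZMod n)ˣ) : ZMod n)) * u := (mul_assoc _ _ _).symm
            _ = (((hu.unit : (ZMod n)ˣ) : ZMod n) * ((hu.unit⁻¹ : (ZMod n)ˣ) : ZMod n)) * u := by
                rw [hu.unit_spec]
            _ = u := by rw [← Units.val_mul, mul_inv_cancel, Units.val_one, one_mul]⟩
      have hw0 : w ≠ 0 := by
        intro h
        apply hu0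
        rw [← hw, h, mul_zero]
      have hχw := hχ w hw0
      rw [hw] at hχw
      have hinflne : infl n a χ u ≠ infl n a χ w := by
        unfold infl
        rw [hχw]
        cases χ w <;> simp
      by_cases hcu : infl n a χ u = c
      · refine ⟨Iblk n a χ u, ⟨mem_BB.mpr (Or.inr (Or.inr (mem_Ifam.mpr ⟨u, hu0, rfl⟩))),
          mem_Iblk.mpr (Or.inl rfl), mem_Iblk.mpr (Or.inr (Or.inr hcu.symm))⟩, ?_⟩
        rintro b ⟨hb, hbu, hbc⟩
        rcases mem_BB.mp hb with rfl | hP | hI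
        · exact absurd (hT0mem u hbu) hu0
        · exact absurd hbc (hcnotP b hP)
        · obtain ⟨x, hx0, rfl⟩ := mem_Ifam.mp hI
          have hcx : c = infl n a χ x := by
            rcases mem_Iblk.mp hbc with h | h | h
            · exact absurd h (hcnotf x)
            · exact absurd h (hcnotf (-2 * x))
            · exact h
          rcases mem_Iblk.mp hbu with h | h | h
          · rw [f_inj h]
          · -- u = -2x, so x = w, contradiction with hinflne
            have hxw : x = w := hm2inj x w (by rw [hw, ← f_inj h])
            rw [hxw] at hcx
            exact absurd (hcu.trans hcx) hinflne
          · exact absurd h (hfne_infl u x)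
      · have hcw : infl n a χ w = c := by
          rcases infl_mem (a := a) (χ := χ) u with h1 | h1 <;>
            rcases infl_mem (a := a) (χ := χ) w with h2 | h2 <;>
            rcases hc with h3 | h3 <;> omega
        refine ⟨Iblk n a χ w, ⟨mem_BB.mpr (Or.inr (Or.inr (mem_Ifam.mpr ⟨w, hw0, rfl⟩))),
          mem_Iblk.mpr (Or.inr (Or.inl (by rw [hw]))), mem_Iblk.mpr (Or.inr (Or.inr hcw.symm))⟩, ?_⟩
        rintro b ⟨hb, hbu, hbc⟩
        rcases mem_BB.mp hb with rfl | hP | hI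
        · exact absurd (hT0mem u hbu) hu0
        · exact absurd hbc (hcnotP b hP)
        · obtain ⟨x, hx0, rfl⟩ := mem_Ifam.mp hI
          have hcx : c = infl n a χ x := by
            rcases mem_Iblk.mp hbc with h | h | h
            · exact absurd h (hcnotf x)
            · exact absurd h (hcnotf (-2 * x))
            · exact h
          rcases mem_Iblk.mp hbu with h | h | h
          · rw [f_inj h] at hcu
            exact absurd hcx.symm hcu
          · have hxw : x = w := hm2inj x w (by rw [hw, ← f_inj h])
            rw [hxw]
          · exact absurd h (hfne_infl u x)
  -- coverage: the two infinity points
  have cov_aa1 : ∃! b, b ∈ BB n a χ ∧ a ∈ b ∧ (a + 1) ∈ b := by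
    refine ⟨{0, a, a + 1}, ⟨hT0BB, by simp, by simp⟩, ?_⟩
    rintro b ⟨hb, hba, hba1⟩
    rcases mem_BB.mp hb with rfl | hP | hI
    · rfl
    · exact absurd hba (a_not_in_P hna hP).1
    · obtain ⟨x, hx0, rfl⟩ := mem_Ifam.mp hI
      have h1 : a = infl n a χ x := by
        rcases mem_Iblk.mp hba with h | h | h
        · exact absurd h (Ne.symm (f_ne_a hna x))
        · exact absurd h (Ne.symm (f_ne_a hna (-2 * x)))
        · exact h
      have h2 : a + 1 = infl n a χ x := by
        rcases mem_Iblk.mp hba1 with h | h | h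
        · exact absurd h (Ne.symm (f_ne_a1 hna x))
        · exact absurd h (Ne.symm (f_ne_a1 hna (-2 * x)))
        · exact h
      omega
  -- classification of labels
  have hclass : ∀ c : ℕ, c < n + 2 → c = a ∨ c = a + 1 ∨ ∃ u : ZMod n, fmap n a u = c := by
    intro c hcn
    by_cases h1 : c = a
    · exact Or.inl h1
    by_cases h2 : c = a + 1
    · exact Or.inr (Or.inl h2)
    · exact Or.inr (Or.inr (f_surj hna hcn h1 h2))
  refine ⟨BB n a χ, fun b hb => (hprops b hb).1, ?_, ?_, ?_⟩
  · intro x hx y hy hxy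
    rw [Finset.mem_range] at hx hy
    rcases hclass x hx with h | h | ⟨u, hfu⟩ <;> rcases hclass y hy with h' | h' | ⟨w, hfw⟩
    · exact absurd (h.trans h'.symm) hxy
    · rw [h, h']; exact cov_aa1
    · rw [h, ← hfw]; exact swap_pair _ _ (cov_inf w a (Or.inl rfl))
    · rw [h, h']; exact swap_pair _ _ cov_aa1
    · exact absurd (h.trans h'.symm) hxy
    · rw [h, ← hfw]; exact swap_pair _ _ (cov_inf w (a + 1) (Or.inr rfl))
    · rw [← hfu, h']; exact cov_inf u a (Or.inl rfl)
    · rw [← hfu, h']; exact cov_inf u (a + 1) (Or.inr rfl)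
    · rw [← hfu, ← hfw]
      exact cov_ff u w (fun hh => hxy (by rw [← hfu, ← hfw, hh]))
  · intro b hb
    have := (hprops b hb).2
    omega
  · intro b1 hb1 b2 hb2
    have h1 := (hprops b1 hb1).2
    have h2 := (hprops b2 hb2).2
    omega

end Stmt13


/-- Suppose `v ≡ 1` or `3 (mod 6)` and for every prime `p` dividing `v−2` the
multiplicative order of `−2` modulo `p` is singly even.  Then there is a Steiner triple
system of order `v` on `{0,…,v−1}` all of whose blocks have element-sum at least `v−2`
and at most `2v+2`; in particular its DiffSum is at most `v+4`. -/
theorem stmt_13 (v : ℕ) (hv : v % 6 = 1 ∨ v % 6 = 3)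
    (horder : ∀ p : ℕ, p.Prime → p ∣ v - 2 → orderOf (-2 : ZMod p) % 4 = 2) :
    ∃ B : Finset (Finset ℕ),
      (∀ b ∈ B, b ⊆ Finset.range v ∧ b.card = 3) ∧
      (∀ x ∈ Finset.range v, ∀ y ∈ Finset.range v, x ≠ y →
        ∃! b, b ∈ B ∧ x ∈ b ∧ y ∈ b) ∧
      (∀ b ∈ B, v - 2 ≤ b.sum id ∧ b.sum id ≤ 2 * v + 2) ∧
      (∀ b1 ∈ B, ∀ b2 ∈ B, b1.sum id ≤ b2.sum id + (v + 4)) := by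
  by_cases hv1 : v = 1
  · subst hv1
    refine ⟨∅, ?_, ?_, ?_, ?_⟩
    · intro b hb; simp at hb
    · intro x hx y hy hxy
      rw [Finset.mem_range] at hx hy
      omega
    · intro b hb; simp at hb
    · intro b1 hb1; simp at hb1
  by_cases hv3 : v = 3
  · subst hv3
    refine ⟨{({0, 1, 2} : Finset ℕ)}, ?_, ?_, ?_, ?_⟩
    · intro b hb
      rw [Finset.mem_singleton] at hb
      subst hb
      exact ⟨by decide, by decide⟩
    · intro x hx y hy hxy
      rw [Finset.mem_range] at hx hy
      refine ⟨{0, 1, 2}, ⟨Finset.mem_singleton_self _, ?_, ?_⟩, ?_⟩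
      · interval_cases x <;> decide
      · interval_cases y <;> decide
      · rintro b ⟨hb, _, _⟩
        exact Finset.mem_singleton.mp hb
    · intro b hb
      rw [Finset.mem_singleton] at hb
      subst hb
      exact ⟨by decide, by decide⟩
    · intro b1 hb1 b2 hb2
      rw [Finset.mem_singleton] at hb1 hb2
      subst hb1; subst hb2
      decide
  · have hv7 : 7 ≤ v := by omega
    obtain ⟨n, rfl⟩ : ∃ n, v = n + 2 := ⟨v - 2, by omega⟩
    have hn5 : 5 ≤ n := by omega
    haveI : NeZero n := ⟨by omega⟩
    have hodd : n % 2 = 1 := by omega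
    have h3 : ¬ (3 ∣ n) := by rcases hv with h | h <;> omega
    have horder' : ∀ p : ℕ, p.Prime → p ∣ n → orderOf (-2 : ZMod p) % 4 = 2 := by
      intro p hp hd
      exact horder p hp (by simpa using hd)
    have hu2 : IsUnit (2 : ZMod n) := by
      have hcop : Nat.Coprime 2 n := (Nat.prime_two.coprime_iff_not_dvd).mpr (by omega)
      have := (ZMod.isUnit_iff_coprime 2 n).mpr hcop
      rwa [Nat.cast_ofNat] at this
    have hu : IsUnit (-2 : ZMod n) := hu2.neg
    have heven : ∀ x : ZMod n, x ≠ 0 → ∀ k : ℕ, 0 < k → (-2 : ZMod n)^k * x = x → Even k :=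
      fun x hx k hk h => period_even n horder' hx hk h
    obtain ⟨χ, hχ⟩ := exists_chi n hu heven
    obtain ⟨a, hna⟩ : ∃ a, n = 2 * a + 1 := ⟨n / 2, by omega⟩
    exact Stmt13.main n a hna (by omega) h3 χ hχ
end

section
/- For every Steiner system S(t,k,v) D and every bijective point labeling rk: V → {0,...,v-1}, the minimum block sum is at most (v(k−t+1) + k(t−2))/2 and the maximum block sum is at least (v(k+t−1) − kt)/2; consequently the difference between maximum and minimum block sums is at least (v−k)(t−1). -/
open Finset

private lemma gaussQ (n : ℕ) : (∑ i ∈ Finset.range n, (i : ℚ)) * 2 = n * (n - 1) := by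
  induction n with
  | zero => simp
  | succ m ih =>
    rw [Finset.sum_range_succ]
    push_cast
    push_cast at ih
    ring_nf
    ring_nf at ih
    linarith

/-- Key averaging lemma: for a fixed `(t-1)`-set `S`, the blocks through `S`
partition the complement of `S` into parts of size `k-t+1`, hence some block's
off-`S` sum is below (resp. above) the average. -/
private lemma key {v k t : ℕ} (ht : 2 ≤ t) (htk : t < k) (hkv : k < v)
    (B : Finset (Finset (Fin v)))
    (hcard : ∀ b ∈ B, b.card = k)
    (hsteiner : ∀ T : Finset (Fin v), T.card = t → ∃! b, b ∈ B ∧ T ⊆ b)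
    (S : Finset (Fin v)) (hS : S.card = t - 1) (f : Fin v → ℚ) :
    (∃ b ∈ B, S ⊆ b ∧
      (∑ x ∈ b \ S, f x) * ((v:ℚ) - t + 1) ≤ (∑ x ∈ Sᶜ, f x) * ((k:ℚ) - t + 1)) ∧
    (∃ b ∈ B, S ⊆ b ∧
      (∑ x ∈ Sᶜ, f x) * ((k:ℚ) - t + 1) ≤ (∑ x ∈ b \ S, f x) * ((v:ℚ) - t + 1)) := by
  classical
  set C : Finset (Finset (Fin v)) := B.filter (fun b => S ⊆ b) with hC
  -- any point outside S lies in a unique block through S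
  have hext : ∀ x : Fin v, x ∉ S → (insert x S).card = t := by
    intro x hx
    rw [Finset.card_insert_of_notMem hx, hS]
    omega
  -- pairwise disjointness of the parts b \ S
  have hdisj : (↑C : Set (Finset (Fin v))).PairwiseDisjoint (fun b => b \ S) := by
    intro b1 hb1 b2 hb2 hne
    simp only [Finset.coe_filter, Set.mem_setOf_eq, hC] at hb1 hb2
    simp only [Function.onFun]
    rw [Finset.disjoint_left]
    intro x hx1 hx2
    simp only [Finset.mem_sdiff] at hx1 hx2
    obtain ⟨b, hb, hbu⟩ := hsteiner (insert x S) (hext x hx1.2)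
    have e1 : b1 = b := hbu b1 ⟨hb1.1, Finset.insert_subset hx1.1 hb1.2⟩
    have e2 : b2 = b := hbu b2 ⟨hb2.1, Finset.insert_subset hx2.1 hb2.2⟩
    exact hne (e1.trans e2.symm)
  -- union of the parts is Sᶜ
  have hunion : C.biUnion (fun b => b \ S) = Sᶜ := by
    ext x
    simp only [Finset.mem_biUnion, Finset.mem_compl, Finset.mem_sdiff, Finset.mem_filter,
      hC]
    constructor
    · rintro ⟨b, ⟨_, _⟩, _, hx⟩; exact hx
    · intro hx
      obtain ⟨b, ⟨hbB, hbs⟩, _⟩ := hsteiner (insert x S) (hext x hx)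
      exact ⟨b, ⟨hbB, (Finset.insert_subset_iff.mp hbs).2⟩,
        (Finset.insert_subset_iff.mp hbs).1, hx⟩
  have hpartcard : ∀ b ∈ C, (b \ S).card = k - (t - 1) := by
    intro b hb
    rw [Finset.mem_filter] at hb
    rw [Finset.card_sdiff_of_subset hb.2, hcard b hb.1, hS]
  have hcompl : Sᶜ.card = v - (t - 1) := by
    rw [Finset.card_compl, hS]; simp
  -- count: |C| * (k - t + 1) = v - t + 1
  have hcount : C.card * (k - (t - 1)) = v - (t - 1) := by
    have := Finset.card_biUnion (fun b hb c hc hne => hdisj hb hc hne)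
    rw [hunion, hcompl] at this
    rw [this, Finset.sum_congr rfl hpartcard, Finset.sum_const, smul_eq_mul]
  have hCne : C.Nonempty := by
    rcases Finset.eq_empty_or_nonempty C with h | h
    · exfalso
      rw [h] at hcount
      simp at hcount
      omega
    · exact h
  -- total of parts equals total over Sᶜ
  have hsum : ∑ b ∈ C, ∑ x ∈ b \ S, f x = ∑ x ∈ Sᶜ, f x := by
    rw [← hunion, Finset.sum_biUnion hdisj]
  have hcardpos : 0 < (C.card : ℚ) := by
    exact_mod_cast Finset.card_pos.mpr hCne
  have hktq : ((k : ℚ) - t + 1) = ((k - (t-1) : ℕ) : ℚ) := by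
    have : t - 1 ≤ k := by omega
    push_cast [this]
    have h2 : (1:ℚ) ≤ t := by exact_mod_cast (by omega : 1 ≤ t)
    push_cast [Nat.cast_sub (by omega : 1 ≤ t)]
    ring
  have hvtq : ((v : ℚ) - t + 1) = ((v - (t-1) : ℕ) : ℚ) := by
    have : t - 1 ≤ v := by omega
    push_cast [this, Nat.cast_sub (by omega : 1 ≤ t)]
    ring
  have hcountq : (C.card : ℚ) * ((k:ℚ) - t + 1) = ((v:ℚ) - t + 1) := by
    rw [hktq, hvtq]
    exact_mod_cast hcount
  have hktpos : (0:ℚ) < (k:ℚ) - t + 1 := by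
    have : (t:ℚ) < k := by exact_mod_cast htk
    linarith
  set Tc : ℚ := ∑ x ∈ Sᶜ, f x with hTc
  constructor
  · -- min direction
    have h1 : ∑ b ∈ C, (∑ x ∈ b \ S, f x) ≤ ∑ b ∈ C, (Tc / C.card) := by
      rw [Finset.sum_const, hsum, nsmul_eq_mul, mul_comm ((C.card : ℚ)),
        div_mul_cancel₀ _ (ne_of_gt hcardpos)]
    obtain ⟨b, hb, hble⟩ := Finset.exists_le_of_sum_le hCne h1
    rw [Finset.mem_filter] at hb
    refine ⟨b, hb.1, hb.2, ?_⟩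
    have : (∑ x ∈ b \ S, f x) * (C.card : ℚ) ≤ Tc := by
      rw [← le_div_iff₀ hcardpos]; exact hble
    calc (∑ x ∈ b \ S, f x) * ((v:ℚ) - t + 1)
        = (∑ x ∈ b \ S, f x) * (C.card : ℚ) * ((k:ℚ) - t + 1) := by
          rw [mul_assoc, hcountq]
      _ ≤ Tc * ((k:ℚ) - t + 1) := by
          exact mul_le_mul_of_nonneg_right this (le_of_lt hktpos)
  · -- max direction
    have h1 : ∑ b ∈ C, (Tc / C.card) ≤ ∑ b ∈ C, (∑ x ∈ b \ S, f x) := by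
      rw [Finset.sum_const, hsum, nsmul_eq_mul, mul_comm ((C.card : ℚ)),
        div_mul_cancel₀ _ (ne_of_gt hcardpos)]
    obtain ⟨b, hb, hble⟩ := Finset.exists_le_of_sum_le hCne h1
    rw [Finset.mem_filter] at hb
    refine ⟨b, hb.1, hb.2, ?_⟩
    have : Tc ≤ (∑ x ∈ b \ S, f x) * (C.card : ℚ) := by
      rw [← div_le_iff₀ hcardpos]; exact hble
    calc Tc * ((k:ℚ) - t + 1)
        ≤ (∑ x ∈ b \ S, f x) * (C.card : ℚ) * ((k:ℚ) - t + 1) := by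
          exact mul_le_mul_of_nonneg_right this (le_of_lt hktpos)
      _ = (∑ x ∈ b \ S, f x) * ((v:ℚ) - t + 1) := by
          rw [mul_assoc, hcountq]

/-- For every Steiner system `S(t,k,v)` and every bijective point labeling by
`{0,…,v-1}`, the minimum block sum is at most `(v(k−t+1) + k(t−2))/2` and the maximum
block sum is at least `(v(k+t−1) − kt)/2`; consequently the difference between maximum
and minimum block sums is at least `(v−k)(t−1)`. -/
theorem stmt_15 (v k t : ℕ) (ht : 2 ≤ t) (htk : t < k) (hkv : k < v)
    (B : Finset (Finset (Fin v)))
    (hcard : ∀ b ∈ B, b.card = k)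
    (hsteiner : ∀ T : Finset (Fin v), T.card = t → ∃! b, b ∈ B ∧ T ⊆ b)
    (rk : Fin v ≃ Fin v) :
    (∃ b ∈ B, (∑ x ∈ b, ((rk x : ℕ) : ℚ))
        ≤ ((v : ℚ) * ((k : ℚ) - t + 1) + (k : ℚ) * ((t : ℚ) - 2)) / 2) ∧
    (∃ b ∈ B, ((v : ℚ) * ((k : ℚ) + t - 1) - (k : ℚ) * t) / 2
        ≤ ∑ x ∈ b, ((rk x : ℕ) : ℚ)) ∧
    (∃ b1 ∈ B, ∃ b2 ∈ B,
      ((v : ℚ) - k) * ((t : ℚ) - 1)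
        ≤ (∑ x ∈ b1, ((rk x : ℕ) : ℚ)) - ∑ x ∈ b2, ((rk x : ℕ) : ℚ)) := by
  classical
  set f : Fin v → ℚ := fun x => ((rk x : ℕ) : ℚ) with hf
  have hm1v : t - 1 ≤ v := by omega
  have hvpos : 0 < v := by omega
  -- total sum of all labels
  have htotal : ∑ x : Fin v, f x = (v : ℚ) * ((v:ℚ) - 1) / 2 := by
    have h1 : ∑ x : Fin v, f x = ∑ y : Fin v, ((y : ℕ) : ℚ) :=
      Equiv.sum_comp rk (fun y => ((y : ℕ) : ℚ))
    rw [h1, Fin.sum_univ_eq_sum_range (fun i => (i : ℚ)) v]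
    have := gaussQ v
    linarith
  have hvtpos : (0:ℚ) < (v:ℚ) - t + 1 := by
    have : (t:ℚ) < v := by exact_mod_cast (by omega : t < v)
    linarith
  -- small set: points with labels 0..t-2
  have injS : Function.Injective (fun i : Fin (t-1) => rk.symm (Fin.castLE hm1v i)) := by
    intro a b hab
    have := rk.symm.injective hab
    exact Fin.castLE_injective hm1v this
  set S1 : Finset (Fin v) :=
    (Finset.univ : Finset (Fin (t-1))).map ⟨_, injS⟩ with hS1
  have hS1card : S1.card = t - 1 := by
    rw [hS1, Finset.card_map, Finset.card_univ, Fintype.card_fin]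
  have hS1sum : (∑ x ∈ S1, f x) * 2 = ((t:ℚ) - 1) * ((t:ℚ) - 2) := by
    rw [hS1, Finset.sum_map]
    have h1 : ∀ i : Fin (t-1), f (rk.symm (Fin.castLE hm1v i)) = ((i : ℕ) : ℚ) := by
      intro i
      simp [hf, Equiv.apply_symm_apply]
    simp only [Function.Embedding.coeFn_mk, h1]
    rw [Fin.sum_univ_eq_sum_range (fun i => (i : ℚ)) (t-1)]
    have := gaussQ (t-1)
    have hc : ((t - 1 : ℕ) : ℚ) = (t:ℚ) - 1 := by
      push_cast [Nat.cast_sub (by omega : 1 ≤ t)]; ring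
    rw [this, hc]
    ring
  -- large set: points with labels v-1 .. v-t+1
  have hlarge : ∀ i : Fin (t-1), v - 1 - (i : ℕ) < v := by
    intro i; omega
  have injS2 : Function.Injective
      (fun i : Fin (t-1) => rk.symm ⟨v - 1 - (i : ℕ), hlarge i⟩) := by
    intro a b hab
    have := rk.symm.injective hab
    have h2 : v - 1 - (a : ℕ) = v - 1 - (b : ℕ) := congrArg Fin.val this
    have ha := a.isLt
    have hb := b.isLt
    exact Fin.ext (by omega)
  set S2 : Finset (Fin v) :=
    (Finset.univ : Finset (Fin (t-1))).map ⟨_, injS2⟩ with hS2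
  have hS2card : S2.card = t - 1 := by
    rw [hS2, Finset.card_map, Finset.card_univ, Fintype.card_fin]
  have hS2sum : (∑ x ∈ S2, f x) * 2 = ((t:ℚ) - 1) * (2 * (v:ℚ) - t) := by
    rw [hS2, Finset.sum_map]
    have h1 : ∀ i : Fin (t-1), f (rk.symm ⟨v - 1 - (i : ℕ), hlarge i⟩)
        = (v:ℚ) - 1 - ((i : ℕ) : ℚ) := by
      intro i
      simp only [hf, Equiv.apply_symm_apply]
      have hi : (i : ℕ) ≤ v - 1 := by omega
      push_cast [Nat.cast_sub hi, Nat.cast_sub (by omega : 1 ≤ v)]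
      ring
    simp only [Function.Embedding.coeFn_mk, h1]
    rw [Fin.sum_univ_eq_sum_range (fun i => (v:ℚ) - 1 - (i : ℚ)) (t-1)]
    rw [Finset.sum_sub_distrib, Finset.sum_const, Finset.card_range, nsmul_eq_mul]
    have := gaussQ (t-1)
    have hc : ((t - 1 : ℕ) : ℚ) = (t:ℚ) - 1 := by
      push_cast [Nat.cast_sub (by omega : 1 ≤ t)]; ring
    rw [hc] at this ⊢
    linear_combination -this
  -- complement sums
  have hcompl : ∀ S : Finset (Fin v),
      ∑ x ∈ Sᶜ, f x = ∑ x : Fin v, f x - ∑ x ∈ S, f x := by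
    intro S
    have := Finset.sum_add_sum_compl S f
    linarith
  obtain ⟨⟨b1, hb1B, hb1S, hb1le⟩, -⟩ :=
    key ht htk hkv B hcard hsteiner S1 hS1card f
  obtain ⟨-, ⟨b2, hb2B, hb2S, hb2ge⟩⟩ :=
    key ht htk hkv B hcard hsteiner S2 hS2card f
  have hsplit1 : ∑ x ∈ b1, f x = ∑ x ∈ b1 \ S1, f x + ∑ x ∈ S1, f x :=
    (Finset.sum_sdiff hb1S).symm
  have hsplit2 : ∑ x ∈ b2, f x = ∑ x ∈ b2 \ S2, f x + ∑ x ∈ S2, f x :=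
    (Finset.sum_sdiff hb2S).symm
  have hc1 := hcompl S1
  have hc2 := hcompl S2
  rw [htotal] at hc1 hc2
  -- now pure algebra
  have hmin : ∑ x ∈ b1, f x
      ≤ ((v : ℚ) * ((k : ℚ) - t + 1) + (k : ℚ) * ((t : ℚ) - 2)) / 2 := by
    rw [hc1] at hb1le
    rw [hsplit1]
    nlinarith [hb1le, hS1sum, hvtpos, mul_pos hvtpos hvtpos]
  have hmax : ((v : ℚ) * ((k : ℚ) + t - 1) - (k : ℚ) * t) / 2 ≤ ∑ x ∈ b2, f x := by
    rw [hc2] at hb2ge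
    rw [hsplit2]
    nlinarith [hb2ge, hS2sum, hvtpos, mul_pos hvtpos hvtpos]
  refine ⟨⟨b1, hb1B, hmin⟩, ⟨b2, hb2B, hmax⟩, ⟨b2, hb2B, b1, hb1B, ?_⟩⟩
  have : ((v : ℚ) - k) * ((t : ℚ) - 1)
      = (((v : ℚ) * ((k : ℚ) + t - 1) - (k : ℚ) * t) / 2)
        - (((v : ℚ) * ((k : ℚ) - t + 1) + (k : ℚ) * ((t : ℚ) - 2)) / 2) := by
    ring
  linarith
end
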